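/- arXiv:0911.2515 — 9 statements merged into one kernel-verified Lean document; each statement's English description precedes it below -/
import Mathlib

section
/- For every integer d ≥ 2 and every unit vector ψ in the antisymmetric subspace of ℂ^d ⊗ ℂ^d, the largest squared Schmidt coefficient of ψ satisfies λ_max(ψ) ≤ 1/2. -/
open scoped BigOperators
open Matrix Kronecker

noncomputable section

/-- Outer product `|ψ⟩⟨ψ|` of a vector with itself. -/
def outer {n : Type*} [Fintype n] (ψ : n → ℂ) : Matrix n n ℂ :=
  fun i j => ψ i * (starRingEnd ℂ) (ψ j)

/-- Partial trace over the first tensor factor. -/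
def ptraceA {α β : Type*} [Fintype α] (M : Matrix (α × β) (α × β) ℂ) :
    Matrix β β ℂ :=
  fun j j' => ∑ i, M (i, j) (i, j')

/-- Tensor (Kronecker) product of two vectors. -/
def tensorVec {α β : Type*} (ψ : α → ℂ) (φ : β → ℂ) : α × β → ℂ :=
  fun x => ψ x.1 * φ x.2

/-- The swap operator `V(x ⊗ y) = y ⊗ x` as a matrix on `ℂ^d ⊗ ℂ^d`. -/
def swapMat (d : ℕ) : Matrix (Fin d × Fin d) (Fin d × Fin d) ℂ :=
  fun p q => if p.1 = q.2 ∧ p.2 = q.1 then 1 else 0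

/-- Projector onto the antisymmetric subspace: `P_a = (I - V)/2`. -/
def Pa (d : ℕ) : Matrix (Fin d × Fin d) (Fin d × Fin d) ℂ :=
  (1 / 2 : ℂ) • ((1 : Matrix (Fin d × Fin d) (Fin d × Fin d) ℂ) - swapMat d)

/-- Eigenvalues of a matrix (real, via the spectral theorem);
junk value `0` if the matrix is not Hermitian. -/
def specVals {n : Type*} [Fintype n] [DecidableEq n] (ρ : Matrix n n ℂ) : n → ℝ :=
  if h : ρ.IsHermitian then h.eigenvalues else 0

/-- Largest eigenvalue of a (Hermitian) matrix. -/
def lambdaMax {n : Type*} [Fintype n] [DecidableEq n] (ρ : Matrix n n ℂ) : ℝ :=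
  ⨆ i, specVals ρ i

/-- Rényi `p`-entropy (base 2): `S_p(ρ) = (1/(1-p)) log₂ Tr ρ^p` for `p ≠ 1`;
at `p = 1` it is the von Neumann entropy `-Tr ρ log₂ ρ`. -/
def Sp {n : Type*} [Fintype n] [DecidableEq n] (p : ℝ) (ρ : Matrix n n ℂ) : ℝ :=
  if p = 1 then ∑ i, -(specVals ρ i * Real.logb 2 (specVals ρ i))
  else (1 / (1 - p)) * Real.logb 2 (∑ i, specVals ρ i ^ p)

/-- Regrouping of a vector on `(A×B) ⊗ (A'×B')` as a vector on `(A×A') ⊗ (B×B')`. -/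
def regroup {α β : Type*} (Ψ : (α × β) × (α × β) → ℂ) : (α × α) × (β × β) → ℂ :=
  fun q => Ψ ((q.1.1, q.2.1), (q.1.2, q.2.2))

/-- Regrouping of a matrix on `(A×B) ⊗ (A'×B')` as a matrix on `(A×A') ⊗ (B×B')`. -/
def regroupMat {α β : Type*}
    (M : Matrix ((α × β) × (α × β)) ((α × β) × (α × β)) ℂ) :
    Matrix ((α × α) × (β × β)) ((α × α) × (β × β)) ℂ :=
  fun x y => M ((x.1.1, x.2.1), (x.1.2, x.2.2)) ((y.1.1, y.2.1), (y.1.2, y.2.2))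

/-- Binary entropy function (base 2). -/
def binEnt (x : ℝ) : ℝ := -(x * Real.logb 2 x) - (1 - x) * Real.logb 2 (1 - x)

/-- Output of the channel with Choi–Jamiołkowski state `τ`:
`Λ(ρ) = d · Tr_A[(ρ^T ⊗ I) τ]`, applied to the pure input `ρ = |Φ⟩⟨Φ|`. -/
def choiOutput {m n : Type*} [Fintype m] [Fintype n] [DecidableEq n]
    (τ : Matrix (m × n) (m × n) ℂ) (Φ : m → ℂ) : Matrix n n ℂ :=
  (Fintype.card m : ℂ) • ptraceA (((outer Φ)ᵀ ⊗ₖ (1 : Matrix n n ℂ)) * τ)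


section Aux

open scoped BigOperators

lemma mul_conj'' (z : ℂ) : z * (starRingEnd ℂ) z = ((‖z‖ : ℝ) : ℂ) ^ 2 :=
  Complex.mul_conj' z

lemma key_bound (d : ℕ) (ψ : Fin d × Fin d → ℂ)
    (hψ : ∑ x, ‖ψ x‖ ^ 2 = 1)
    (ha : ∀ i j, ψ (j, i) = -ψ (i, j))
    (v : Fin d → ℂ) (hv : ∑ j, ‖v j‖ ^ 2 = 1) :
    ∑ i, ‖∑ j, ψ (i, j) * (starRingEnd ℂ) (v j)‖ ^ 2 ≤ 1 / 2 := by
  set c := starRingEnd ℂ with hc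
  set z : Fin d → ℂ := fun i => ∑ j, ψ (i, j) * c (v j) with hz
  set w : Fin d × Fin d → ℂ := fun x => z x.1 * v x.2 - z x.2 * v x.1 with hw
  set S : ℝ := ∑ i, ‖z i‖ ^ 2 with hS
  have hS0 : 0 ≤ S := Finset.sum_nonneg fun i _ => by positivity
  have hSC : ∑ i, z i * c (z i) = (S : ℂ) := by
    rw [hS]; push_cast
    exact Finset.sum_congr rfl fun i _ => mul_conj'' (z i)
  have hNV : ∑ j, v j * c (v j) = 1 := by
    have h : ∑ j, v j * c (v j) = ((∑ j, ‖v j‖ ^ 2 : ℝ) : ℂ) := by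
      push_cast
      exact Finset.sum_congr rfl fun j _ => mul_conj'' (v j)
    rw [h, hv]; norm_num
  -- orthogonality of v and z
  have hT : ∑ i, c (v i) * z i = 0 := by
    have h1 : ∑ i, c (v i) * z i
        = ∑ i, ∑ j, c (v i) * (ψ (i, j) * c (v j)) := by
      simp [hz, Finset.mul_sum]
    have h2 : ∑ i, ∑ j, c (v i) * (ψ (i, j) * c (v j))
        = -∑ i, ∑ j, c (v i) * (ψ (i, j) * c (v j)) := by
      conv_lhs => rw [Finset.sum_comm]
      rw [← Finset.sum_neg_distrib]
      refine Finset.sum_congr rfl fun i _ => ?_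
      rw [← Finset.sum_neg_distrib]
      refine Finset.sum_congr rfl fun j _ => ?_
      rw [ha i j]; ring
    have h3 := h1.trans h2
    rw [← h1] at h3
    linear_combination h3 / 2
  have hT' : ∑ i, v i * c (z i) = 0 := by
    have := congrArg c hT
    simpa [map_sum, mul_comm] using this
  -- the antisymmetrized expression equals 2S
  have h2S : ∑ x : Fin d × Fin d, ψ x * c (w x) = (2 * S : ℂ) := by
    have hbase : ∑ i, ∑ j, ψ (i, j) * (c (z i) * c (v j)) = (S : ℂ) := by
      rw [← hSC]
      refine Finset.sum_congr rfl fun i _ => ?_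
      rw [hz]
      simp only [Finset.sum_mul]
      refine Finset.sum_congr rfl fun j _ => ?_
      ring
    have hswap : ∑ i, ∑ j, ψ (i, j) * (c (z j) * c (v i)) = -(S : ℂ) := by
      rw [← hbase, Finset.sum_comm, ← Finset.sum_neg_distrib]
      refine Finset.sum_congr rfl fun i _ => ?_
      rw [← Finset.sum_neg_distrib]
      refine Finset.sum_congr rfl fun j _ => ?_
      rw [ha i j]; ring
    calc ∑ x : Fin d × Fin d, ψ x * c (w x)
        = ∑ i, ∑ j, (ψ (i, j) * (c (z i) * c (v j))
            - ψ (i, j) * (c (z j) * c (v i))) := by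
          rw [Fintype.sum_prod_type]
          refine Finset.sum_congr rfl fun i _ => Finset.sum_congr rfl fun j _ => ?_
          simp only [hw, map_sub, _root_.map_mul]
          ring
      _ = (S : ℂ) - (-(S : ℂ)) := by
          rw [← hswap, ← hbase, ← Finset.sum_sub_distrib]
          exact Finset.sum_congr rfl fun i _ => Finset.sum_sub_distrib _ _
      _ = (2 * S : ℂ) := by ring
  -- the norm of w squared sums to 2S
  have hD : ∑ x : Fin d × Fin d, ‖w x‖ ^ 2 = 2 * S := by
    have hC : ∑ x : Fin d × Fin d, w x * c (w x) = (2 * S : ℂ) := by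
      have expand : ∀ i j : Fin d, w (i, j) * c (w (i, j))
          = (z i * c (z i)) * (v j * c (v j)) + (v i * c (v i)) * (z j * c (z j))
            - (c (v i) * z i) * (v j * c (z j)) - (v i * c (z i)) * (c (v j) * z j) := by
        intro i j
        simp only [hw, map_sub, _root_.map_mul]
        ring
      calc ∑ x : Fin d × Fin d, w x * c (w x)
          = ∑ i, ∑ j, ((z i * c (z i)) * (v j * c (v j))
              + (v i * c (v i)) * (z j * c (z j))
              - (c (v i) * z i) * (v j * c (z j)) - (v i * c (z i)) * (c (v j) * z j)) := by
            rw [Fintype.sum_prod_type]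
            exact Finset.sum_congr rfl fun i _ => Finset.sum_congr rfl fun j _ => expand i j
        _ = (∑ i, z i * c (z i)) * (∑ j, v j * c (v j))
              + (∑ i, v i * c (v i)) * (∑ j, z j * c (z j))
              - (∑ i, c (v i) * z i) * (∑ j, v j * c (z j))
              - (∑ i, v i * c (z i)) * (∑ j, c (v j) * z j) := by
            simp only [Finset.sum_sub_distrib, Finset.sum_add_distrib,
              ← Finset.sum_mul_sum]
        _ = (2 * S : ℂ) := by rw [hSC, hNV, hT, hT']; ring
    have : ((∑ x : Fin d × Fin d, ‖w x‖ ^ 2 : ℝ) : ℂ) = ((2 * S : ℝ) : ℂ) := by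
      push_cast
      rw [← hC]
      exact Finset.sum_congr rfl fun x _ => (mul_conj'' (w x)).symm
    exact_mod_cast this
  -- Cauchy–Schwarz
  have hCS : (∑ x : Fin d × Fin d, ‖ψ x‖ * ‖w x‖) ^ 2
      ≤ (∑ x, ‖ψ x‖ ^ 2) * (∑ x, ‖w x‖ ^ 2) :=
    Finset.sum_mul_sq_le_sq_mul_sq Finset.univ _ _
  have hnorm : 2 * S ≤ ∑ x : Fin d × Fin d, ‖ψ x‖ * ‖w x‖ := by
    have h0 : ‖∑ x : Fin d × Fin d, ψ x * c (w x)‖ = 2 * S := by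
      rw [h2S, show (2 : ℂ) * (S : ℂ) = ((2 * S : ℝ) : ℂ) by push_cast; ring,
        Complex.norm_real]
      exact abs_of_nonneg (by linarith)
    calc 2 * S = ‖∑ x : Fin d × Fin d, ψ x * c (w x)‖ := h0.symm
      _ ≤ ∑ x : Fin d × Fin d, ‖ψ x * c (w x)‖ := norm_sum_le _ _
      _ = ∑ x : Fin d × Fin d, ‖ψ x‖ * ‖w x‖ := by
          refine Finset.sum_congr rfl fun x _ => ?_
          rw [norm_mul, RCLike.norm_conj]
  have hfin : (2 * S) ^ 2 ≤ 2 * S := by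
    calc (2 * S) ^ 2 ≤ (∑ x : Fin d × Fin d, ‖ψ x‖ * ‖w x‖) ^ 2 := by
          apply pow_le_pow_left₀ (by linarith) hnorm
      _ ≤ (∑ x, ‖ψ x‖ ^ 2) * (∑ x, ‖w x‖ ^ 2) := hCS
      _ = 2 * S := by rw [hψ, hD]; ring
  nlinarith [hS0, hfin]

end Aux

/-- every unit vector of the antisymmetric subspace of `ℂ^d ⊗ ℂ^d`
(`d ≥ 2`) has largest squared Schmidt coefficient at most `1/2`. -/
theorem stmt0 (d : ℕ) (hd : 2 ≤ d) (ψ : Fin d × Fin d → ℂ)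
    (hψ : ∑ x, ‖ψ x‖ ^ 2 = 1) (hanti : (Pa d).mulVec ψ = ψ) :
    lambdaMax (ptraceA (outer ψ)) ≤ 1 / 2 := by
  -- antisymmetry of ψ
  have ha : ∀ i j, ψ (j, i) = -ψ (i, j) := by
    intro i j
    have h := congrFun hanti (i, j)
    have hsw : (swapMat d *ᵥ ψ) (i, j) = ψ (j, i) := by
      simp [Matrix.mulVec, dotProduct, swapMat, Fintype.sum_prod_type, ite_and]
    rw [Pa, Matrix.smul_mulVec, Matrix.sub_mulVec, Matrix.one_mulVec] at h
    simp only [Pi.smul_apply, Pi.sub_apply, smul_eq_mul] at h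
    rw [hsw] at h
    linear_combination -2 * h
  -- the reduced density matrix is Hermitian
  have hH : (ptraceA (outer ψ)).IsHermitian := by
    ext j j'
    simp only [Matrix.conjTranspose_apply, ptraceA, outer, star_sum, star_mul',
      RCLike.star_def, Complex.conj_conj]
    exact Finset.sum_congr rfl fun i _ => by ring
  rw [lambdaMax, specVals, dif_pos hH]
  have hd0 : Nonempty (Fin d) := ⟨⟨0, by omega⟩⟩
  refine ciSup_le fun k => ?_
  set c := starRingEnd ℂ with hcdef
  set v : Fin d → ℂ := ⇑(hH.eigenvectorBasis k) with hvdef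
  have hv1 : ∑ j, ‖v j‖ ^ 2 = 1 := by
    have hnb : ‖hH.eigenvectorBasis k‖ = 1 := hH.eigenvectorBasis.orthonormal.1 k
    have hne : ‖hH.eigenvectorBasis k‖ = Real.sqrt (∑ j, ‖v j‖ ^ 2) := by
      rw [EuclideanSpace.norm_eq]
    have hsum : (0 : ℝ) ≤ ∑ j, ‖v j‖ ^ 2 := Finset.sum_nonneg fun j _ => by positivity
    have := hne.symm.trans hnb
    nlinarith [Real.sq_sqrt hsum]
  set z : Fin d → ℂ := fun i => ∑ j, ψ (i, j) * c (v j) with hz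
  have hvv : ∑ j, c (v j) * v j = 1 := by
    have h : ∑ j, c (v j) * v j = ((∑ j, ‖v j‖ ^ 2 : ℝ) : ℂ) := by
      push_cast
      exact Finset.sum_congr rfl fun j _ => by rw [mul_comm]; exact mul_conj'' (v j)
    rw [h, hv1]; norm_num
  have heig := hH.mulVec_eigenvectorBasis k
  have lhs1 : ∑ j, c (v j) * ((ptraceA (outer ψ)) *ᵥ v) j = (hH.eigenvalues k : ℂ) := by
    rw [show (ptraceA (outer ψ)) *ᵥ v = (hH.eigenvalues k : ℝ) • v from heig]
    simp only [Pi.smul_apply, Complex.real_smul]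
    rw [show ∑ j, c (v j) * ((hH.eigenvalues k : ℂ) * v j)
        = (hH.eigenvalues k : ℂ) * ∑ j, c (v j) * v j by
      rw [Finset.mul_sum]; exact Finset.sum_congr rfl fun j _ => by ring]
    rw [hvv]; ring
  have lhs2 : ∑ j, c (v j) * ((ptraceA (outer ψ)) *ᵥ v) j = ∑ i, z i * c (z i) := by
    calc ∑ j, c (v j) * ((ptraceA (outer ψ)) *ᵥ v) j
        = ∑ j, ∑ j', ∑ i, (ψ (i, j) * c (v j)) * (c (ψ (i, j')) * v j') := by
          simp only [Matrix.mulVec, dotProduct, ptraceA, outer, Finset.mul_sum,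
            Finset.sum_mul]
          exact Finset.sum_congr rfl fun j _ => Finset.sum_congr rfl fun j' _ =>
            Finset.sum_congr rfl fun i _ => by ring
      _ = ∑ i, ∑ j, ∑ j', (ψ (i, j) * c (v j)) * (c (ψ (i, j')) * v j') := by
          rw [show (∑ j, ∑ j', ∑ i, (ψ (i, j) * c (v j)) * (c (ψ (i, j')) * v j'))
              = ∑ j, ∑ i, ∑ j', (ψ (i, j) * c (v j)) * (c (ψ (i, j')) * v j') from
            Finset.sum_congr rfl fun j _ => Finset.sum_comm]
          exact Finset.sum_comm
      _ = ∑ i, (∑ j, ψ (i, j) * c (v j)) * (∑ j', c (ψ (i, j')) * v j') := by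
          exact Finset.sum_congr rfl fun i _ => (Finset.sum_mul_sum _ _ _ _).symm
      _ = ∑ i, z i * c (z i) := by
          refine Finset.sum_congr rfl fun i _ => ?_
          congr 1
          rw [hz]
          simp [map_sum]
  have hkey : hH.eigenvalues k = ∑ i, ‖z i‖ ^ 2 := by
    have h : (hH.eigenvalues k : ℂ) = ((∑ i, ‖z i‖ ^ 2 : ℝ) : ℂ) := by
      rw [← lhs1, lhs2]
      push_cast
      exact Finset.sum_congr rfl fun i _ => mul_conj'' (z i)
    exact_mod_cast h
  rw [hkey]
  exact key_bound d ψ hψ ha v hv1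
end
end

section
/- For every integer d ≥ 2, every unit vector ψ in the antisymmetric subspace of ℂ^d ⊗ ℂ^d, and every real p with p > 0 (including the von Neumann case p = 1), the Rényi entropy of the reduced density matrix satisfies S_p(Tr_A |ψ⟩⟨ψ|) ≥ 1. -/
open scoped BigOperators
open Matrix Kronecker

noncomputable section

lemma swap_mulVec {d : ℕ} (ψ : Fin d × Fin d → ℂ) (x : Fin d × Fin d) :
    (swapMat d).mulVec ψ x = ψ (x.2, x.1) := by
  simp only [Matrix.mulVec, dotProduct, swapMat, ite_mul, one_mul, zero_mul]
  rw [Finset.sum_eq_single (x.2, x.1)]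
  · simp
  · intro q _ hq
    have h : ¬(x.1 = q.2 ∧ x.2 = q.1) := by
      rintro ⟨h1, h2⟩
      exact hq (Prod.ext h2.symm h1.symm)
    simp [h]
  · simp

lemma anti_of_Pa {d : ℕ} (ψ : Fin d × Fin d → ℂ) (hanti : (Pa d).mulVec ψ = ψ) :
    ∀ i j, ψ (j, i) = -ψ (i, j) := by
  intro i j
  have h := congrFun hanti (i, j)
  simp only [Pa, Matrix.smul_mulVec, Matrix.sub_mulVec, Matrix.one_mulVec,
    Pi.smul_apply, Pi.sub_apply, smul_eq_mul] at h
  rw [swap_mulVec ψ (i, j)] at h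
  dsimp at h
  linear_combination -2 * h

-- hermitian
lemma ptrace_outer_isHermitian {d : ℕ} (ψ : Fin d × Fin d → ℂ) :
    (ptraceA (outer ψ)).IsHermitian := by
  ext j j'
  simp only [Matrix.conjTranspose_apply, ptraceA, outer, Complex.star_def, map_sum, _root_.map_mul, Complex.conj_conj]
  exact Finset.sum_congr rfl fun i _ => by ring

-- quadratic form of ptraceA (outer ψ)
lemma dot_form {d : ℕ} (ψ : Fin d × Fin d → ℂ) (v : Fin d → ℂ) :
    dotProduct (star v) ((ptraceA (outer ψ)) *ᵥ v)
      = ((∑ i, Complex.normSq (∑ j, (starRingEnd ℂ) (v j) * ψ (i, j)) : ℝ) : ℂ) := by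
  have expand : dotProduct (star v) ((ptraceA (outer ψ)) *ᵥ v)
      = ∑ j, ∑ j', ∑ i,
        ((starRingEnd ℂ) (v j) * ψ (i, j)) * ((starRingEnd ℂ) (ψ (i, j')) * v j') := by
    simp only [dotProduct, Matrix.mulVec, ptraceA, outer, Pi.star_apply,
      Finset.mul_sum, Finset.sum_mul, Complex.star_def]
    refine Finset.sum_congr rfl fun j _ => Finset.sum_congr rfl fun j' _ =>
      Finset.sum_congr rfl fun i _ => by ring
  rw [expand]
  rw [show (∑ j, ∑ j', ∑ i,
        ((starRingEnd ℂ) (v j) * ψ (i, j)) * ((starRingEnd ℂ) (ψ (i, j')) * v j'))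
      = ∑ j, ∑ i, ∑ j',
        ((starRingEnd ℂ) (v j) * ψ (i, j)) * ((starRingEnd ℂ) (ψ (i, j')) * v j') from
    Finset.sum_congr rfl fun j _ => Finset.sum_comm ..]

  rw [show (∑ j, ∑ i, ∑ j',
        ((starRingEnd ℂ) (v j) * ψ (i, j)) * ((starRingEnd ℂ) (ψ (i, j')) * v j'))
      = ∑ i, ∑ j, ∑ j',
        ((starRingEnd ℂ) (v j) * ψ (i, j)) * ((starRingEnd ℂ) (ψ (i, j')) * v j') from
    Finset.sum_comm ..]
  rw [Complex.ofReal_sum]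
  refine Finset.sum_congr rfl fun i _ => ?_
  have h1 : (∑ j, (starRingEnd ℂ) (v j) * ψ (i, j)) * (∑ j', (starRingEnd ℂ) (ψ (i, j')) * v j')
      = ∑ j, ∑ j', ((starRingEnd ℂ) (v j) * ψ (i, j)) * ((starRingEnd ℂ) (ψ (i, j')) * v j') :=
    Finset.sum_mul_sum _ _ _ _
  rw [← h1]
  have h2 : (∑ j', (starRingEnd ℂ) (ψ (i, j')) * v j')
      = (starRingEnd ℂ) (∑ j, (starRingEnd ℂ) (v j) * ψ (i, j)) := by
    rw [map_sum]
    refine Finset.sum_congr rfl fun j _ => ?_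
    simp only [_root_.map_mul, Complex.conj_conj]
    ring
  rw [h2, Complex.mul_conj]

lemma sum_mul_conj_self' {n : Type*} [Fintype n] (f : n → ℂ) :
    ∑ i, f i * (starRingEnd ℂ) (f i) = ((∑ i, ‖f i‖ ^ 2 : ℝ) : ℂ) := by
  rw [Complex.ofReal_sum]
  refine Finset.sum_congr rfl fun i _ => ?_
  rw [Complex.mul_conj, Complex.normSq_eq_norm_sq]

lemma trace_ptrace {d : ℕ} (ψ : Fin d × Fin d → ℂ) (hψ : ∑ x, ‖ψ x‖ ^ 2 = 1) :
    (ptraceA (outer ψ)).trace = 1 := by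
  simp only [Matrix.trace, Matrix.diag, ptraceA, outer]
  rw [Finset.sum_comm,
    ← Fintype.sum_prod_type (f := fun x : Fin d × Fin d => ψ x * (starRingEnd ℂ) (ψ x)),
    sum_mul_conj_self', hψ]
  norm_num

lemma trace_eq_sum_eig {n : Type*} [Fintype n] [DecidableEq n] {A : Matrix n n ℂ}
    (hA : A.IsHermitian) : A.trace = ∑ k, (hA.eigenvalues k : ℂ) := by
  conv_lhs => rw [hA.spectral_theorem, Unitary.conjStarAlgAut_apply]
  rw [Matrix.trace_mul_cycle,
    (Matrix.mem_unitaryGroup_iff').mp (hA.eigenvectorUnitary).2, one_mul,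
    Matrix.trace_diagonal]
  simp


lemma sum_mul_conj_self {n : Type*} [Fintype n] (f : n → ℂ) :
    ∑ i, f i * (starRingEnd ℂ) (f i) = ((∑ i, ‖f i‖ ^ 2 : ℝ) : ℂ) := by
  rw [Complex.ofReal_sum]
  refine Finset.sum_congr rfl fun i _ => ?_
  rw [Complex.mul_conj, Complex.normSq_eq_norm_sq]

lemma key_quad {d : ℕ} (ψ : Fin d × Fin d → ℂ)
    (hψ : ∑ x, ‖ψ x‖ ^ 2 = 1)
    (ha : ∀ i j, ψ (j, i) = -ψ (i, j))
    (v : Fin d → ℂ) (hv : ∑ i, ‖v i‖ ^ 2 = 1) :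
    2 * (∑ i, Complex.normSq (∑ j, (starRingEnd ℂ) (v j) * ψ (i, j))) ≤ 1 := by
  set φ : Fin d → ℂ := fun i => ∑ j, (starRingEnd ℂ) (v j) * ψ (i, j) with hφ
  have hφ' : ∀ i, φ i = ∑ j, (starRingEnd ℂ) (v j) * ψ (i, j) := fun i => rfl
  set T : ℂ := ∑ i, φ i * (starRingEnd ℂ) (φ i) with hT
  have hΨ1 : ∑ i : Fin d, ∑ j : Fin d, ψ (i, j) * (starRingEnd ℂ) (ψ (i, j)) = 1 := by
    rw [← Fintype.sum_prod_type (f := fun x => ψ x * (starRingEnd ℂ) (ψ x)),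
      sum_mul_conj_self, hψ]
    norm_num
  have hv1 : ∑ i, v i * (starRingEnd ℂ) (v i) = 1 := by rw [sum_mul_conj_self, hv]; norm_num
  have hχ : ∀ j, ∑ i, (starRingEnd ℂ) (v i) * ψ (i, j) = -φ j := by
    intro j
    rw [hφ', ← Finset.sum_neg_distrib]
    refine Finset.sum_congr rfl fun i _ => ?_
    rw [ha j i]
    ring
  have hχ' : ∀ j, ∑ i, v i * (starRingEnd ℂ) (ψ (i, j)) = -(starRingEnd ℂ) (φ j) := by
    intro j
    have h := congrArg (starRingEnd ℂ) (hχ j)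
    simp only [map_sum, _root_.map_mul, map_neg, Complex.conj_conj] at h
    exact h
  have hc0 : ∑ i, (starRingEnd ℂ) (v i) * φ i = 0 := by
    have hS : (∑ i, ∑ j, (starRingEnd ℂ) (v i) * ((starRingEnd ℂ) (v j) * ψ (i, j)))
        = -∑ i, ∑ j, (starRingEnd ℂ) (v i) * ((starRingEnd ℂ) (v j) * ψ (i, j)) := by
      conv_lhs => rw [Finset.sum_comm]
      rw [← Finset.sum_neg_distrib]
      refine Finset.sum_congr rfl fun i _ => ?_
      rw [← Finset.sum_neg_distrib]
      refine Finset.sum_congr rfl fun j _ => ?_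
      rw [ha i j]
      ring
    have hS0 : (∑ i, ∑ j, (starRingEnd ℂ) (v i) * ((starRingEnd ℂ) (v j) * ψ (i, j))) = 0 := by
      linear_combination (1/2 : ℂ) * hS
    calc ∑ i, (starRingEnd ℂ) (v i) * φ i
        = ∑ i, ∑ j, (starRingEnd ℂ) (v i) * ((starRingEnd ℂ) (v j) * ψ (i, j)) := by
          refine Finset.sum_congr rfl fun i _ => ?_
          rw [hφ', Finset.mul_sum]
    _ = 0 := hS0
  have hc0' : ∑ i, v i * (starRingEnd ℂ) (φ i) = 0 := by
    have h := congrArg (starRingEnd ℂ) hc0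
    simp only [map_sum, _root_.map_mul, Complex.conj_conj, map_zero] at h
    exact h
  -- the nine double sums
  have e2 : ∑ i, ∑ j, ψ (i, j) * ((starRingEnd ℂ) (v i) * (starRingEnd ℂ) (φ j)) = -T := by
    rw [Finset.sum_comm, hT, ← Finset.sum_neg_distrib]
    refine Finset.sum_congr rfl fun j _ => ?_
    have h1 : ∑ i, ψ (i, j) * ((starRingEnd ℂ) (v i) * (starRingEnd ℂ) (φ j))
        = (starRingEnd ℂ) (φ j) * ∑ i, (starRingEnd ℂ) (v i) * ψ (i, j) := by
      rw [Finset.mul_sum]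
      exact Finset.sum_congr rfl fun i _ => by ring
    rw [h1, hχ]
    ring
  have e3 : ∑ i, ∑ j, ψ (i, j) * ((starRingEnd ℂ) (v j) * (starRingEnd ℂ) (φ i)) = T := by
    rw [hT]
    refine Finset.sum_congr rfl fun i _ => ?_
    have h1 : ∑ j, ψ (i, j) * ((starRingEnd ℂ) (v j) * (starRingEnd ℂ) (φ i))
        = (starRingEnd ℂ) (φ i) * ∑ j, (starRingEnd ℂ) (v j) * ψ (i, j) := by
      rw [Finset.mul_sum]
      exact Finset.sum_congr rfl fun j _ => by ring
    rw [h1, ← hφ' i]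
    ring
  have e4 : ∑ i, ∑ j, (v i * φ j) * (starRingEnd ℂ) (ψ (i, j)) = -T := by
    rw [Finset.sum_comm, hT, ← Finset.sum_neg_distrib]
    refine Finset.sum_congr rfl fun j _ => ?_
    have h1 : ∑ i, (v i * φ j) * (starRingEnd ℂ) (ψ (i, j))
        = φ j * ∑ i, v i * (starRingEnd ℂ) (ψ (i, j)) := by
      rw [Finset.mul_sum]
      exact Finset.sum_congr rfl fun i _ => by ring
    rw [h1, hχ']
    ring
  have e7 : ∑ i, ∑ j, (v j * φ i) * (starRingEnd ℂ) (ψ (i, j)) = T := by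
    rw [hT]
    refine Finset.sum_congr rfl fun i _ => ?_
    have h1 : ∑ j, (v j * φ i) * (starRingEnd ℂ) (ψ (i, j))
        = φ i * ∑ j, v j * (starRingEnd ℂ) (ψ (i, j)) := by
      rw [Finset.mul_sum]
      exact Finset.sum_congr rfl fun j _ => by ring
    have h2 : ∑ j, v j * (starRingEnd ℂ) (ψ (i, j)) = (starRingEnd ℂ) (φ i) := by
      rw [hφ' i, map_sum]
      exact Finset.sum_congr rfl fun j _ => by
        simp only [_root_.map_mul, Complex.conj_conj]
    rw [h1, h2]
  have e5 : ∑ i, ∑ j, (v i * φ j) * ((starRingEnd ℂ) (v i) * (starRingEnd ℂ) (φ j)) = T := by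
    have h1 : ∀ i, ∑ j, (v i * φ j) * ((starRingEnd ℂ) (v i) * (starRingEnd ℂ) (φ j))
        = (v i * (starRingEnd ℂ) (v i)) * T := by
      intro i
      rw [hT, Finset.mul_sum]
      exact Finset.sum_congr rfl fun j _ => by ring
    simp only [h1]
    rw [← Finset.sum_mul, hv1, one_mul]
  have e9 : ∑ i, ∑ j, (v j * φ i) * ((starRingEnd ℂ) (v j) * (starRingEnd ℂ) (φ i)) = T := by
    have h1 : ∀ i, ∑ j, (v j * φ i) * ((starRingEnd ℂ) (v j) * (starRingEnd ℂ) (φ i))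
        = (φ i * (starRingEnd ℂ) (φ i)) * ∑ j, v j * (starRingEnd ℂ) (v j) := by
      intro i
      rw [Finset.mul_sum]
      exact Finset.sum_congr rfl fun j _ => by ring
    simp only [h1, hv1, mul_one]
    exact hT.symm
  have e6 : ∑ i, ∑ j, (v i * φ j) * ((starRingEnd ℂ) (v j) * (starRingEnd ℂ) (φ i)) = 0 := by
    have h1 : ∀ i, ∑ j, (v i * φ j) * ((starRingEnd ℂ) (v j) * (starRingEnd ℂ) (φ i))
        = (v i * (starRingEnd ℂ) (φ i)) * ∑ j, (starRingEnd ℂ) (v j) * φ j := by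
      intro i
      rw [Finset.mul_sum]
      exact Finset.sum_congr rfl fun j _ => by ring
    simp only [h1, hc0, mul_zero, Finset.sum_const_zero]
  have e8 : ∑ i, ∑ j, (v j * φ i) * ((starRingEnd ℂ) (v i) * (starRingEnd ℂ) (φ j)) = 0 := by
    have h1 : ∀ i, ∑ j, (v j * φ i) * ((starRingEnd ℂ) (v i) * (starRingEnd ℂ) (φ j))
        = ((starRingEnd ℂ) (v i) * φ i) * ∑ j, v j * (starRingEnd ℂ) (φ j) := by
      intro i
      rw [Finset.mul_sum]
      exact Finset.sum_congr rfl fun j _ => by ring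
    simp only [h1, hc0', mul_zero, Finset.sum_const_zero]
  -- main identity
  set η : Fin d → Fin d → ℂ := fun i j => ψ (i, j) + v i * φ j - v j * φ i with hη
  have hη' : ∀ i j, η i j = ψ (i, j) + v i * φ j - v j * φ i := fun i j => rfl
  have main : ∑ i, ∑ j, η i j * (starRingEnd ℂ) (η i j) = 1 - 2 * T := by
    have point : ∀ i j, η i j * (starRingEnd ℂ) (η i j) =
        ψ (i, j) * (starRingEnd ℂ) (ψ (i, j))
        + ψ (i, j) * ((starRingEnd ℂ) (v i) * (starRingEnd ℂ) (φ j))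
        - ψ (i, j) * ((starRingEnd ℂ) (v j) * (starRingEnd ℂ) (φ i))
        + (v i * φ j) * (starRingEnd ℂ) (ψ (i, j))
        + (v i * φ j) * ((starRingEnd ℂ) (v i) * (starRingEnd ℂ) (φ j))
        - (v i * φ j) * ((starRingEnd ℂ) (v j) * (starRingEnd ℂ) (φ i))
        - (v j * φ i) * (starRingEnd ℂ) (ψ (i, j))
        - (v j * φ i) * ((starRingEnd ℂ) (v i) * (starRingEnd ℂ) (φ j))
        + (v j * φ i) * ((starRingEnd ℂ) (v j) * (starRingEnd ℂ) (φ i)) := by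
      intro i j
      rw [hη' i j]
      simp only [map_add, map_sub, _root_.map_mul]
      ring
    simp only [point, Finset.sum_add_distrib, Finset.sum_sub_distrib]
    rw [hΨ1, e2, e3, e4, e5, e6, e7, e8, e9]
    ring
  -- take real parts
  have hTr : T = ((∑ i, Complex.normSq (φ i) : ℝ) : ℂ) := by
    rw [hT, Complex.ofReal_sum]
    exact Finset.sum_congr rfl fun i _ => (Complex.mul_conj _)
  have hηr : ∑ i, ∑ j, η i j * (starRingEnd ℂ) (η i j)
      = ((∑ i, ∑ j, Complex.normSq (η i j) : ℝ) : ℂ) := by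
    rw [Complex.ofReal_sum]
    refine Finset.sum_congr rfl fun i _ => ?_
    rw [Complex.ofReal_sum]
    exact Finset.sum_congr rfl fun j _ => (Complex.mul_conj _)
  rw [hηr, hTr] at main
  have hreal : (∑ i, ∑ j, Complex.normSq (η i j) : ℝ)
      = 1 - 2 * (∑ i, Complex.normSq (φ i)) := by
    exact_mod_cast main
  have hnn : 0 ≤ (∑ i, ∑ j, Complex.normSq (η i j) : ℝ) :=
    Finset.sum_nonneg fun i _ => Finset.sum_nonneg fun j _ => Complex.normSq_nonneg _
  rw [hreal] at hnn
  linarith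


lemma entropy_bound {n : Type*} [Fintype n] (lam : n → ℝ)
    (h0 : ∀ i, 0 ≤ lam i) (hhalf : ∀ i, lam i ≤ 1/2) (hsum : ∑ i, lam i = 1)
    (p : ℝ) (hp : 0 < p) :
    1 ≤ if p = 1 then ∑ i, -(lam i * Real.logb 2 (lam i))
        else (1 / (1 - p)) * Real.logb 2 (∑ i, lam i ^ p) := by
  have h2 : (1:ℝ) < 2 := one_lt_two
  by_cases hp1 : p = 1
  · simp only [hp1, if_pos rfl]
    calc (1:ℝ) = ∑ i, lam i := hsum.symm
    _ ≤ ∑ i, -(lam i * Real.logb 2 (lam i)) := by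
        apply Finset.sum_le_sum
        intro i _
        rcases eq_or_lt_of_le (h0 i) with h | h
        · simp [← h]
        · have hlog : Real.logb 2 (lam i) ≤ -1 := by
            have : Real.logb 2 (lam i) ≤ Real.logb 2 (1/2) :=
              Real.logb_le_logb_of_le h2 h (hhalf i)
            simpa [one_div, Real.logb_inv, Real.logb_self_eq_one h2] using this
          nlinarith
  · simp only [if_neg hp1]
    have hpossum : 0 < ∑ i, lam i ^ p := by
      have : ∃ i, 0 < lam i := by
        by_contra hcon
        push_neg at hcon
        have : ∑ i, lam i = 0 := le_antisymm (Finset.sum_nonpos (fun i _ => hcon i))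
          (Finset.sum_nonneg (fun i _ => h0 i))
        rw [hsum] at this; norm_num at this
      obtain ⟨i, hi⟩ := this
      refine Finset.sum_pos' (fun j _ => Real.rpow_nonneg (h0 j) p) ⟨i, Finset.mem_univ i, ?_⟩
      exact Real.rpow_pos_of_pos hi p
    have h2pow : ((2:ℝ) ^ (1 - p)) = (1/2 : ℝ) ^ (p - 1) := by
      rw [one_div, Real.inv_rpow (by norm_num : (0:ℝ) ≤ 2), ← Real.rpow_neg (by norm_num)]
      ring_nf
    rcases lt_or_gt_of_ne (fun h => hp1 (by linarith) : p ≠ 1) with hlt | hgt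
    · -- p < 1 : sum ≥ 2^(1-p)
      have hbig : (2:ℝ) ^ (1 - p) ≤ ∑ i, lam i ^ p := by
        rw [h2pow]
        calc ((1:ℝ)/2) ^ (p-1) = (∑ i, lam i) * (1/2:ℝ)^(p-1) := by rw [hsum, one_mul]
        _ = ∑ i, lam i * (1/2:ℝ)^(p-1) := by rw [Finset.sum_mul]
        _ ≤ ∑ i, lam i ^ p := by
            apply Finset.sum_le_sum
            intro i _
            rcases eq_or_lt_of_le (h0 i) with h | h
            · rw [← h, Real.zero_rpow (ne_of_gt hp), zero_mul]
            · have : (1/2:ℝ)^(p-1) ≤ lam i ^ (p-1) :=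
                Real.rpow_le_rpow_of_nonpos h (hhalf i) (by linarith)
              calc lam i * (1/2:ℝ)^(p-1) ≤ lam i * lam i ^ (p-1) :=
                    mul_le_mul_of_nonneg_left this (h0 i)
              _ = lam i ^ p := by
                  rw [← Real.rpow_one_add' (h0 i) (by simpa using ne_of_gt hp)]
                  ring_nf
      have hlog : 1 - p ≤ Real.logb 2 (∑ i, lam i ^ p) := by
        have := Real.logb_le_logb_of_le h2 (Real.rpow_pos_of_pos two_pos (1-p)) hbig
        rwa [Real.logb_rpow (by norm_num) (by norm_num)] at this
      have hc : 0 < 1/(1-p) := div_pos one_pos (by linarith)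
      calc (1:ℝ) = (1/(1-p)) * (1-p) := (one_div_mul_cancel (by linarith)).symm
      _ ≤ (1/(1-p)) * Real.logb 2 (∑ i, lam i ^ p) :=
          mul_le_mul_of_nonneg_left hlog (le_of_lt hc)
    · -- p > 1
      have hsmall : ∑ i, lam i ^ p ≤ (2:ℝ) ^ (1 - p) := by
        rw [h2pow]
        calc ∑ i, lam i ^ p ≤ ∑ i, lam i * (1/2:ℝ)^(p-1) := by
              apply Finset.sum_le_sum
              intro i _
              rcases eq_or_lt_of_le (h0 i) with h | h
              · rw [← h, Real.zero_rpow (ne_of_gt hp), zero_mul]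
              · have hle : lam i ^ (p-1) ≤ (1/2:ℝ)^(p-1) :=
                  Real.rpow_le_rpow (h0 i) (hhalf i) (by linarith)
                calc lam i ^ p = lam i * lam i ^ (p-1) := by
                      rw [← Real.rpow_one_add' (h0 i) (by simpa using ne_of_gt hp)]
                      ring_nf
                _ ≤ lam i * (1/2:ℝ)^(p-1) := mul_le_mul_of_nonneg_left hle (h0 i)
        _ = (1/2:ℝ)^(p-1) := by rw [← Finset.sum_mul, hsum, one_mul]
      have hlog : Real.logb 2 (∑ i, lam i ^ p) ≤ 1 - p := by
        have := Real.logb_le_logb_of_le h2 hpossum hsmall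
        rwa [Real.logb_rpow (by norm_num) (by norm_num)] at this
      have hc : 1/(1-p) ≤ 0 := by
        apply div_nonpos_of_nonneg_of_nonpos <;> linarith
      calc (1:ℝ) = (1/(1-p)) * (1-p) := (one_div_mul_cancel (by linarith : (1:ℝ)-p ≠ 0)).symm
      _ ≤ (1/(1-p)) * Real.logb 2 (∑ i, lam i ^ p) := by
            apply mul_le_mul_of_nonpos_left hlog hc


/-- every unit vector of the antisymmetric subspace of `ℂ^d ⊗ ℂ^d`
(`d ≥ 2`) has Rényi entropy of its reduction at least `1`, for every `p > 0`
(including the von Neumann case `p = 1`). -/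
theorem stmt2 (d : ℕ) (hd : 2 ≤ d) (ψ : Fin d × Fin d → ℂ)
    (hψ : ∑ x, ‖ψ x‖ ^ 2 = 1) (hanti : (Pa d).mulVec ψ = ψ)
    (p : ℝ) (hp : 0 < p) :
    1 ≤ Sp p (ptraceA (outer ψ)) := by
  have hH : (ptraceA (outer ψ)).IsHermitian := ptrace_outer_isHermitian ψ
  have hspec : specVals (ptraceA (outer ψ)) = hH.eigenvalues := by
    rw [specVals, dif_pos hH]
  have ha := anti_of_Pa ψ hanti
  have hbound : ∀ k, 0 ≤ hH.eigenvalues k ∧ hH.eigenvalues k ≤ 1/2 := by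
    intro k
    have hvnorm : ∑ i, ‖(hH.eigenvectorBasis k) i‖ ^ 2 = 1 := by
      have h1 : ‖(hH.eigenvectorBasis k : EuclideanSpace ℂ (Fin d))‖ = 1 :=
        hH.eigenvectorBasis.orthonormal.1 k
      have h2 := congrArg (· ^ 2) h1
      rw [EuclideanSpace.norm_eq] at h2
      simpa [Real.sq_sqrt (Finset.sum_nonneg fun i _ => sq_nonneg _)] using h2
    have heig := hH.eigenvalues_eq k
    rw [dot_form ψ (⇑(hH.eigenvectorBasis k))] at heig
    have heig' : hH.eigenvalues k
        = ∑ i, Complex.normSq (∑ j, (starRingEnd ℂ) ((hH.eigenvectorBasis k) j) * ψ (i, j)) := by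
      simpa using heig
    constructor
    · rw [heig']
      exact Finset.sum_nonneg fun i _ => Complex.normSq_nonneg _
    · have hq := key_quad ψ hψ ha (⇑(hH.eigenvectorBasis k)) hvnorm
      have hq' : 2 * (∑ i, Complex.normSq
          (∑ j, (starRingEnd ℂ) ((hH.eigenvectorBasis k) j) * ψ (i, j))) ≤ 1 := by
        simpa using hq
      rw [heig']
      linarith
  have hsum : ∑ k, hH.eigenvalues k = 1 := by
    have h1 := trace_eq_sum_eig hH
    rw [trace_ptrace ψ hψ] at h1
    have h2 : ((∑ k, hH.eigenvalues k : ℝ) : ℂ) = 1 := by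
      push_cast
      exact h1.symm
    exact_mod_cast h2
  have hfin := entropy_bound hH.eigenvalues (fun k => (hbound k).1)
    (fun k => (hbound k).2) hsum p hp
  rw [Sp, hspec]
  exact hfin
end
end

section
/- Let P be a rank-k orthogonal projector on ℂ^{d_A} ⊗ ℂ^{d_B} with k ≤ d_A·d_B. Then the largest squared Schmidt coefficient of the unit vector ψ^+(P) across the cut AA':BB' satisfies λ_max ≥ k/(d_A·d_B). -/
open scoped BigOperators
open Matrix Kronecker

noncomputable section

lemma rayleigh {n : Type*} [Fintype n] [DecidableEq n] [Nonempty n]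
    (ρ : Matrix n n ℂ) (hρ : ρ.IsHermitian) (Φ : n → ℂ)
    (hΦ : star Φ ⬝ᵥ Φ = 1) :
    (star Φ ⬝ᵥ (ρ *ᵥ Φ)).re ≤ lambdaMax ρ := by
  set U : Matrix n n ℂ := (hρ.eigenvectorUnitary : Matrix n n ℂ) with hU
  have hUU : U * star U = 1 := (Matrix.mem_unitaryGroup_iff).mp hρ.eigenvectorUnitary.2
  set v : n → ℂ := star U *ᵥ Φ with hv
  have hsv : star v = star Φ ᵥ* U := by
    rw [hv, star_mulVec]
    simp [Matrix.star_eq_conjTranspose, conjTranspose_conjTranspose]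
  have key : star Φ ⬝ᵥ (ρ *ᵥ Φ)
      = ∑ i, (hρ.eigenvalues i : ℂ) * (star (v i) * v i) := by
    conv_lhs => rw [hρ.spectral_theorem, Unitary.conjStarAlgAut_apply]
    rw [← mulVec_mulVec, ← mulVec_mulVec, dotProduct_mulVec, ← hsv]
    simp only [mulVec, dotProduct, diagonal, of_apply, Function.comp_apply, Pi.star_apply]
    rw [Finset.sum_congr rfl]
    intro i _
    rw [Finset.sum_eq_single i]
    · simp only [if_pos rfl, hv, mulVec, dotProduct, Pi.star_apply, star_apply]
      simp only [Complex.star_def, if_true, ← hU]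
      rw [mul_left_comm]; rfl
    · intro b _ hb; simp [hb.symm]
    · simp
  have h2 : star v ⬝ᵥ v = 1 := by
    rw [hsv, hv, ← dotProduct_mulVec, mulVec_mulVec, hUU, one_mulVec, hΦ]
  have hnorm : ∑ i, Complex.normSq (v i) = 1 := by
    have := congrArg Complex.re h2
    simpa [dotProduct, Complex.normSq, Complex.mul_re] using this
  have hre : (star Φ ⬝ᵥ (ρ *ᵥ Φ)).re = ∑ i, hρ.eigenvalues i * Complex.normSq (v i) := by
    rw [key, Complex.re_sum]
    refine Finset.sum_congr rfl fun i _ => ?_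
    have : (star (v i) * v i) = (Complex.normSq (v i) : ℂ) := by
      rw [Complex.star_def, mul_comm, Complex.mul_conj]
    rw [this]
    simp [Complex.ofReal_mul]
  have hle : ∀ i, hρ.eigenvalues i ≤ lambdaMax ρ := by
    intro i
    have : specVals ρ i ≤ lambdaMax ρ :=
      le_ciSup (Set.Finite.bddAbove (Set.finite_range _)) i
    rwa [specVals, dif_pos hρ] at this
  calc (star Φ ⬝ᵥ (ρ *ᵥ Φ)).re = ∑ i, hρ.eigenvalues i * Complex.normSq (v i) := hre
    _ ≤ ∑ i, lambdaMax ρ * Complex.normSq (v i) := by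
        refine Finset.sum_le_sum fun i _ => ?_
        exact mul_le_mul_of_nonneg_right (hle i) (Complex.normSq_nonneg _)
    _ = lambdaMax ρ := by rw [← Finset.mul_sum, hnorm, mul_one]

/-- Hayden's lemma: for a rank-`k` projector
`P = ∑ᵢ |ψᵢ⟩⟨ψᵢ|` on `ℂ^{d_A} ⊗ ℂ^{d_B}` with `k ≤ d_A d_B`, the vector
`ψ⁺(P) = k^{-1/2} ∑ᵢ ψᵢ ⊗ ψᵢ*` has largest squared Schmidt coefficient across
the cut `AA' : BB'` at least `k/(d_A d_B)`. -/
theorem stmt3 (dA dB k : ℕ) (hk : 1 ≤ k) (hkle : k ≤ dA * dB)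
    (ψ : Fin k → (Fin dA × Fin dB → ℂ))
    (hON : ∀ i j, star (ψ i) ⬝ᵥ ψ j = if i = j then 1 else 0)
    (Ψ : (Fin dA × Fin dA) × (Fin dB × Fin dB) → ℂ)
    (hΨ : Ψ = regroup (fun x : (Fin dA × Fin dB) × (Fin dA × Fin dB) =>
      ((1 / Real.sqrt k : ℝ) : ℂ) * ∑ i, ψ i x.1 * (starRingEnd ℂ) (ψ i x.2))) :
    (k : ℝ) / (dA * dB) ≤ lambdaMax (ptraceA (outer Ψ)) := by
  have hdAdB : 1 ≤ dA * dB := le_trans hk hkle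
  have hdA : 0 < dA := by
    rcases Nat.eq_zero_or_pos dA with h | h
    · simp [h] at hdAdB
    · exact h
  have hdB : 0 < dB := by
    rcases Nat.eq_zero_or_pos dB with h | h
    · simp [h] at hdAdB
    · exact h
  haveI : Nonempty (Fin dB) := ⟨⟨0, hdB⟩⟩
  haveI : Nonempty (Fin dA) := ⟨⟨0, hdA⟩⟩
  set ρ := ptraceA (outer Ψ) with hρdef
  have hherm : ρ.IsHermitian := by
    show ρᴴ = ρ
    ext x y
    simp only [conjTranspose_apply, hρdef, ptraceA, outer, star_sum]
    refine Finset.sum_congr rfl fun i _ => ?_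
    simp [Complex.star_def, mul_comm]
  set w : ℂ := ((1 / Real.sqrt dB : ℝ) : ℂ) with hw
  set Φ : Fin dB × Fin dB → ℂ := fun p => if p.1 = p.2 then w else 0 with hΦdef
  have hww : w * w = ((1 / (dB:ℝ) : ℝ) : ℂ) := by
    rw [hw, ← Complex.ofReal_mul]
    congr 1
    rw [div_mul_div_comm, one_mul, Real.mul_self_sqrt (by positivity)]
  have hstarΦ : star Φ = Φ := by
    funext p
    simp only [Pi.star_apply, hΦdef]
    split <;> simp [hw, Complex.conj_ofReal, Complex.star_def]
  have diagsum : ∀ (f : Fin dB × Fin dB → ℂ), (∑ p, f p * Φ p) = ∑ c, f (c,c) * w := by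
    intro f
    rw [Fintype.sum_prod_type]
    refine Finset.sum_congr rfl fun c _ => ?_
    rw [Finset.sum_eq_single c]
    · simp [hΦdef]
    · intro b _ hb
      simp [hΦdef, Ne.symm hb]
    · simp
  have hΦunit : star Φ ⬝ᵥ Φ = 1 := by
    rw [hstarΦ, dotProduct, diagsum Φ]
    simp only [hΦdef, if_pos rfl]
    rw [Finset.sum_const, Finset.card_univ, Fintype.card_fin, nsmul_eq_mul, hww]
    push_cast
    have hne : (dB:ℂ) ≠ 0 := by exact_mod_cast hdB.ne'
    field_simp
  -- the amplitude
  set T : Fin dA × Fin dA → ℂ := fun p => ∑ b, Ψ (p, (b, b)) with hT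
  have h1 : ∀ x, (ρ *ᵥ Φ) x = ∑ c, ρ x (c,c) * w := fun x => diagsum (ρ x)
  have hQ : star Φ ⬝ᵥ (ρ *ᵥ Φ)
      = (w * w) * ∑ p : Fin dA × Fin dA, T p * (starRingEnd ℂ) (T p) := by
    rw [hstarΦ, dotProduct]
    have e1 : ∑ x, Φ x * (ρ *ᵥ Φ) x = ∑ x, (ρ *ᵥ Φ) x * Φ x :=
      Finset.sum_congr rfl (fun x _ => mul_comm _ _)
    rw [e1, diagsum (ρ *ᵥ Φ)]
    have e2 : ∑ c, (ρ *ᵥ Φ) (c,c) * w = ∑ b, (∑ c, ρ (b,b) (c,c) * w) * w :=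
      Finset.sum_congr rfl (fun b _ => by rw [h1])
    rw [e2]
    have e3 : ∀ b : Fin dB, (∑ c, ρ (b,b) (c,c) * w) * w
        = (w * w) * ∑ c, ρ (b,b) (c,c) := fun b => by
      rw [Finset.sum_mul]
      rw [Finset.mul_sum]
      exact Finset.sum_congr rfl fun c _ => by ring
    rw [Finset.sum_congr rfl (fun b _ => e3 b), ← Finset.mul_sum]
    congr 1
    -- ∑ b, ∑ c, ρ (b,b) (c,c) = ∑ p, T p * conj (T p)
    have e4 : ∀ b c, ρ (b,b) (c,c)
        = ∑ p : Fin dA × Fin dA, Ψ (p,(b,b)) * (starRingEnd ℂ) (Ψ (p,(c,c))) := by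
      intro b c; rfl
    simp only [e4]
    have e5 : ∀ b : Fin dB, ∑ c : Fin dB, ∑ p : Fin dA × Fin dA,
        Ψ (p,(b,b)) * (starRingEnd ℂ) (Ψ (p,(c,c)))
        = ∑ p : Fin dA × Fin dA, ∑ c : Fin dB,
        Ψ (p,(b,b)) * (starRingEnd ℂ) (Ψ (p,(c,c))) := fun b => Finset.sum_comm
    rw [Finset.sum_congr rfl fun b _ => e5 b, Finset.sum_comm]
    refine Finset.sum_congr rfl fun p _ => ?_
    rw [hT, map_sum, Finset.sum_mul_sum]
  have hQre : (star Φ ⬝ᵥ (ρ *ᵥ Φ)).re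
      = (1 / (dB:ℝ)) * ∑ p : Fin dA × Fin dA, Complex.normSq (T p) := by
    rw [hQ, hww]
    have : ∑ p : Fin dA × Fin dA, T p * (starRingEnd ℂ) (T p)
        = ((∑ p : Fin dA × Fin dA, Complex.normSq (T p) : ℝ) : ℂ) := by
      push_cast
      exact Finset.sum_congr rfl fun p _ => (Complex.mul_conj _)
    rw [this, ← Complex.ofReal_mul]
    exact Complex.ofReal_re _
  -- trace of T over the diagonal
  have hTr : ∑ a : Fin dA, T (a,a) = ((Real.sqrt k : ℝ) : ℂ) := by
    have hval : ∀ (a : Fin dA) (b : Fin dB), Ψ ((a,a),(b,b))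
        = ((1 / Real.sqrt k : ℝ) : ℂ) * ∑ i, ψ i (a,b) * (starRingEnd ℂ) (ψ i (a,b)) := by
      intro a b; rw [hΨ]; rfl
    have step1 : ∑ a : Fin dA, T (a,a)
        = ((1 / Real.sqrt k : ℝ) : ℂ) * ∑ a : Fin dA, ∑ b : Fin dB,
            ∑ i, ψ i (a,b) * (starRingEnd ℂ) (ψ i (a,b)) := by
      rw [Finset.mul_sum]
      refine Finset.sum_congr rfl fun a _ => ?_
      rw [hT, Finset.mul_sum]
      exact Finset.sum_congr rfl fun b _ => hval a b
    rw [step1]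
    have step2 : ∀ i : Fin k, ∑ x : Fin dA × Fin dB,
        ψ i x * (starRingEnd ℂ) (ψ i x) = 1 := by
      intro i
      have := hON i i
      rw [if_pos rfl] at this
      rw [← this, dotProduct]
      exact Finset.sum_congr rfl fun x _ => by
        simp [Complex.star_def]; ring
    have step3 : ∑ a : Fin dA, ∑ b : Fin dB, ∑ i, ψ i (a,b) * (starRingEnd ℂ) (ψ i (a,b))
        = (k : ℂ) := by
      have e : ∀ a : Fin dA, ∑ b : Fin dB, ∑ i, ψ i (a,b) * (starRingEnd ℂ) (ψ i (a,b))
          = ∑ i, ∑ b : Fin dB, ψ i (a,b) * (starRingEnd ℂ) (ψ i (a,b)) :=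
        fun a => Finset.sum_comm
      rw [Finset.sum_congr rfl fun a _ => e a, Finset.sum_comm]
      have : ∀ i : Fin k, ∑ a : Fin dA, ∑ b : Fin dB,
          ψ i (a,b) * (starRingEnd ℂ) (ψ i (a,b)) = 1 := by
        intro i
        have h := step2 i
        rw [Fintype.sum_prod_type] at h
        exact h
      rw [Finset.sum_congr rfl fun i _ => this i]
      simp
    rw [step3, ← Complex.ofReal_natCast, ← Complex.ofReal_mul]
    congr 1
    have h0 : (0:ℝ) < Real.sqrt k := Real.sqrt_pos.2 (by exact_mod_cast hk)
    field_simp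
    exact (Real.sq_sqrt (Nat.cast_nonneg _)).symm
  -- Cauchy-Schwarz lower bound
  have hCS : (k : ℝ) / dA ≤ ∑ a : Fin dA, Complex.normSq (T (a,a)) := by
    have hknn : (0:ℝ) ≤ (k:ℝ) := by positivity
    have hnormsum : ‖∑ a : Fin dA, T (a,a)‖ = Real.sqrt k := by
      rw [hTr, Complex.norm_real, Real.norm_eq_abs, abs_of_nonneg (Real.sqrt_nonneg _)]
    have h2 : Real.sqrt k ≤ ∑ a : Fin dA, ‖T (a,a)‖ := hnormsum ▸ norm_sum_le _ _
    have h3 : (∑ a : Fin dA, ‖T (a,a)‖)^2 ≤ (dA : ℝ) * ∑ a : Fin dA, ‖T (a,a)‖^2 := by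
      simpa using sq_sum_le_card_mul_sum_sq
        (s := (Finset.univ : Finset (Fin dA))) (f := fun a => ‖T (a,a)‖)
    have h4 : (k:ℝ) ≤ (dA:ℝ) * ∑ a : Fin dA, ‖T (a,a)‖^2 := by
      calc (k:ℝ) = (Real.sqrt k)^2 := (Real.sq_sqrt hknn).symm
        _ ≤ (∑ a : Fin dA, ‖T (a,a)‖)^2 := pow_le_pow_left₀ (Real.sqrt_nonneg _) h2 2
        _ ≤ _ := h3
    have h5 : ∑ a : Fin dA, ‖T (a,a)‖^2 = ∑ a : Fin dA, Complex.normSq (T (a,a)) := by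
      refine Finset.sum_congr rfl fun a _ => ?_
      rw [← Complex.normSq_eq_norm_sq]
    rw [div_le_iff₀ (by exact_mod_cast hdA)]
    rw [← h5]
    linarith [h4]
  have hdiagle : ∑ a : Fin dA, Complex.normSq (T (a,a))
      ≤ ∑ p : Fin dA × Fin dA, Complex.normSq (T p) := by
    rw [Fintype.sum_prod_type]
    refine Finset.sum_le_sum fun a _ => ?_
    exact Finset.single_le_sum (f := fun y => Complex.normSq (T (a, y)))
      (fun i _ => Complex.normSq_nonneg _) (Finset.mem_univ a)
  have final : (k:ℝ)/(dA*dB) ≤ (star Φ ⬝ᵥ (ρ *ᵥ Φ)).re := by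
    rw [hQre]
    have heq : (k:ℝ)/((dA:ℝ)*(dB:ℝ)) = (1/(dB:ℝ)) * ((k:ℝ)/(dA:ℝ)) := by
      rw [mul_comm (1/(dB:ℝ)), mul_one_div, div_div]
    rw [heq]
    exact mul_le_mul_of_nonneg_left (le_trans hCS hdiagle) (by positivity)
  exact le_trans final (rayleigh ρ hherm Φ hΦunit)
end
end

section
/- For every integer d ≥ 2, the unit vector ψ^+(P_a) built from the antisymmetric projector P_a on ℂ^d ⊗ ℂ^d has largest squared Schmidt coefficient across the cut AA':BB' at least (d−1)/(2d), and consequently for every real p > 1 its reduced density matrix ρ_{BB'} across that cut satisfies S_p(ρ_{BB'}) ≤ (p/(p−1))·log₂(2d/(d−1)). -/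
open scoped BigOperators
open Matrix Kronecker

noncomputable section

/-! ### Auxiliary lemmas -/

open scoped ComplexOrder

lemma rayleigh_s8 {n : Type*} [Fintype n] [DecidableEq n] {A : Matrix n n ℂ}
    (hA : A.IsHermitian) (x : n → ℂ) (lm : ℝ) (hlm : ∀ i, hA.eigenvalues i ≤ lm) :
    Complex.re (star x ⬝ᵥ A *ᵥ x) ≤ lm * Complex.re (star x ⬝ᵥ x) := by
  classical
  set U : Matrix n n ℂ := (hA.eigenvectorUnitary : Matrix n n ℂ) with hU
  set y : n → ℂ := star U *ᵥ x with hy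
  have hsy : star y = star x ᵥ* U := by
    simp [hy, star_mulVec, star_eq_conjTranspose, conjTranspose_conjTranspose]
  have key : star x ⬝ᵥ A *ᵥ x = ∑ i, (hA.eigenvalues i : ℂ) * ((‖y i‖ : ℂ))^2 := by
    conv_lhs => rw [hA.spectral_theorem, Unitary.conjStarAlgAut_apply]
    rw [← mulVec_mulVec, ← mulVec_mulVec, dotProduct_mulVec (star x) U, ← hsy, ← hU, ← hy]
    simp only [dotProduct, mulVec_diagonal, Function.comp_apply, Pi.star_apply]
    refine Finset.sum_congr rfl fun i _ => ?_
    rw [mul_left_comm, RCLike.star_def, mul_comm ((starRingEnd ℂ) (y i)) (y i),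
      Complex.mul_conj']
    rfl
  have hyx : star y ⬝ᵥ y = star x ⬝ᵥ x := by
    rw [hsy, hy, ← dotProduct_mulVec, mulVec_mulVec,
      (Matrix.mem_unitaryGroup_iff).mp hA.eigenvectorUnitary.2, one_mulVec]
  have hyy : Complex.re (star x ⬝ᵥ x) = ∑ i, ‖y i‖^2 := by
    rw [← hyx]
    simp [dotProduct, RCLike.star_def, mul_comm ((starRingEnd ℂ) _),
      Complex.mul_conj', ← Complex.ofReal_pow, Complex.re_sum]
  rw [key, hyy]
  rw [Complex.re_sum, Finset.mul_sum]
  refine Finset.sum_le_sum fun i _ => ?_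
  have : ((hA.eigenvalues i : ℂ) * ((‖y i‖:ℂ))^2).re = hA.eigenvalues i * ‖y i‖^2 := by
    norm_cast
  rw [this]
  exact mul_le_mul_of_nonneg_right (hlm i) (by positivity)

lemma ptraceA_outer_posSemidef {α β : Type*} [Fintype α] [Fintype β]
    (Ψ : α × β → ℂ) : (ptraceA (outer Ψ)).PosSemidef := by
  classical
  have : ptraceA (outer Ψ) =
      (Matrix.of fun (i : α) (j : β) => star (Ψ (i, j)))ᴴ *
      (Matrix.of fun (i : α) (j : β) => star (Ψ (i, j))) := by
    ext j j'
    simp only [ptraceA, outer, Matrix.mul_apply, Matrix.conjTranspose_apply, Matrix.of_apply,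
      star_star]
    exact Finset.sum_congr rfl fun i _ => rfl
  rw [this]
  exact Matrix.posSemidef_conjTranspose_mul_self _

lemma ite_prod {p q : Prop} [Decidable p] [Decidable q] :
    (if p ∧ q then (1:ℂ) else 0) = (if p then 1 else 0) * (if q then 1 else 0) := by
  by_cases hp : p <;> by_cases hq : q <;> simp [hp, hq]

lemma Pa_apply {d : ℕ} (a b a' b' : Fin d) :
    Pa d (a, b) (a', b') = (1/2 : ℂ) *
      ((if a = a' then (1:ℂ) else 0) * (if b = b' then 1 else 0)
        - (if a = b' then 1 else 0) * (if b = a' then 1 else 0)) := by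
  simp only [Pa, swapMat, Matrix.smul_apply, Matrix.sub_apply, Matrix.one_apply,
    Prod.mk.injEq, smul_eq_mul, ite_prod]

lemma Pa_real {d : ℕ} (a b a' b' : Fin d) :
    (starRingEnd ℂ) (Pa d (a, b) (a', b')) = Pa d (a, b) (a', b') := by
  rw [Pa_apply]
  split_ifs <;> simp [map_ofNat]

lemma keylem {d : ℕ} (b b' e e' : Fin d) :
    ∑ a : Fin d, ∑ a' : Fin d,
      (((if a = a' then (1:ℂ) else 0) * (if b = b' then 1 else 0)
        - (if a = b' then 1 else 0) * (if b = a' then 1 else 0)) *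
       ((if a = a' then (1:ℂ) else 0) * (if e = e' then 1 else 0)
        - (if a = e' then 1 else 0) * (if e = a' then 1 else 0)))
    = ((d:ℂ) - 2) * ((if b = b' then 1 else 0) * (if e = e' then 1 else 0))
      + (if b = e then 1 else 0) * (if b' = e' then 1 else 0) := by
  have expand : ∀ a a' : Fin d,
      (((if a = a' then (1:ℂ) else 0) * (if b = b' then 1 else 0)
        - (if a = b' then 1 else 0) * (if b = a' then 1 else 0)) *
       ((if a = a' then (1:ℂ) else 0) * (if e = e' then 1 else 0)
        - (if a = e' then 1 else 0) * (if e = a' then 1 else 0)))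
      = (if a = a' then (1:ℂ) else 0) * (if a = a' then (1:ℂ) else 0) * ((if b = b' then 1 else 0) * (if e = e' then 1 else 0))
        - (if a = a' then (1:ℂ) else 0) * (if a = e' then 1 else 0) * (if e = a' then 1 else 0) * (if b = b' then 1 else 0)
        - (if a = a' then (1:ℂ) else 0) * (if a = b' then 1 else 0) * (if b = a' then 1 else 0) * (if e = e' then 1 else 0)
        + (if a = b' then 1 else 0) * (if b = a' then 1 else 0) * ((if a = e' then 1 else 0) * (if e = a' then 1 else 0)) := by
    intro a a'; ring
  simp only [expand, Finset.sum_sub_distrib, Finset.sum_add_distrib]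
  have h1 : ∑ a : Fin d, ∑ a' : Fin d, (if a = a' then (1:ℂ) else 0) * (if a = a' then (1:ℂ) else 0) * ((if b = b' then 1 else 0) * (if e = e' then 1 else 0)) = (d:ℂ) * ((if b = b' then 1 else 0) * (if e = e' then 1 else 0)) := by
    simp [Finset.sum_ite_eq, Finset.mul_sum]
  have h2 : ∑ a : Fin d, ∑ a' : Fin d, (if a = a' then (1:ℂ) else 0) * (if a = e' then 1 else 0) * (if e = a' then 1 else 0) * (if b = b' then 1 else 0) = (if e = e' then (1:ℂ) else 0) * (if b = b' then 1 else 0) := by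
    simp [Finset.sum_ite_eq, Finset.sum_ite_eq', mul_ite, ite_mul, eq_comm]
  have h3 : ∑ a : Fin d, ∑ a' : Fin d, (if a = a' then (1:ℂ) else 0) * (if a = b' then 1 else 0) * (if b = a' then 1 else 0) * (if e = e' then 1 else 0) = (if b = b' then (1:ℂ) else 0) * (if e = e' then 1 else 0) := by
    simp [Finset.sum_ite_eq, Finset.sum_ite_eq', mul_ite, ite_mul, eq_comm]
  have h4 : ∑ a : Fin d, ∑ a' : Fin d, (if a = b' then (1:ℂ) else 0) * (if b = a' then 1 else 0) * ((if a = e' then 1 else 0) * (if e = a' then 1 else 0)) = (if b = e then (1:ℂ) else 0) * (if b' = e' then 1 else 0) := by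
    simp [Finset.sum_ite_eq, Finset.sum_ite_eq', mul_ite, ite_mul, eq_comm]
    split_ifs <;> simp
  rw [h1, h2, h3, h4]
  ring_nf

/-- logb of an rpow. -/
lemma logb_rpow' {x p : ℝ} (hx : 0 < x) : Real.logb 2 (x ^ p) = p * Real.logb 2 x := by
  rw [Real.logb, Real.logb, Real.log_rpow hx]
  ring

theorem stmt8 (d : ℕ) (hd : 2 ≤ d)
    (Ψ : (Fin d × Fin d) × (Fin d × Fin d) → ℂ)
    (hΨ : Ψ = regroup (fun x : (Fin d × Fin d) × (Fin d × Fin d) =>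
      ((1 / Real.sqrt (d * (d - 1) / 2 : ℕ) : ℝ) : ℂ) * Pa d x.1 x.2)) :
    ((d : ℝ) - 1) / (2 * d) ≤ lambdaMax (ptraceA (outer Ψ)) ∧
      ∀ p : ℝ, 1 < p →
        Sp p (ptraceA (outer Ψ)) ≤
          (p / (p - 1)) * Real.logb 2 (2 * d / ((d : ℝ) - 1)) := by
  classical
  set c : ℝ := (1 / Real.sqrt (d * (d - 1) / 2 : ℕ) : ℝ) with hc
  have hd0 : (0:ℝ) < d := by positivity
  have hd1 : (1:ℝ) < d := by exact_mod_cast hd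
  have hdm1 : (0:ℝ) < (d:ℝ) - 1 := by linarith
  -- cast of the natural number d*(d-1)/2
  have hdvd : 2 ∣ d * (d - 1) := (Nat.even_mul_pred_self d).two_dvd
  have hkcast : ((d * (d - 1) / 2 : ℕ) : ℝ) = (d:ℝ) * ((d:ℝ) - 1) / 2 := by
    rw [Nat.cast_div hdvd (by norm_num)]
    rw [Nat.cast_mul, Nat.cast_sub (by omega : 1 ≤ d)]
    norm_num
  have hkpos : (0:ℝ) < (d:ℝ) * ((d:ℝ) - 1) / 2 := by positivity
  have hc2 : c ^ 2 = 2 / ((d:ℝ) * ((d:ℝ) - 1)) := by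
    rw [hc, div_pow, one_pow, Real.sq_sqrt (by rw [hkcast]; positivity), hkcast]
    field_simp
  have hcC : ((c : ℂ))^2 = 2 / ((d:ℂ) * ((d:ℂ) - 1)) := by
    rw [show ((c:ℂ))^2 = ((c^2 : ℝ) : ℂ) by push_cast; ring, hc2]
    push_cast
    ring
  -- the reduced density matrix, explicitly
  set ρ : Matrix (Fin d × Fin d) (Fin d × Fin d) ℂ := ptraceA (outer Ψ) with hρ
  have rho_apply : ∀ b b' e e' : Fin d,
      ρ (b, b') (e, e') = (c:ℂ)^2 * (1/4) *
        (((d:ℂ) - 2) * ((if b = b' then 1 else 0) * (if e = e' then 1 else 0))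
          + (if b = e then 1 else 0) * (if b' = e' then 1 else 0)) := by
    intro b b' e e'
    have step : ∀ a a' : Fin d,
        ((c:ℂ) * Pa d (a, b) (a', b')) * (starRingEnd ℂ) ((c:ℂ) * Pa d (a, e) (a', e'))
        = (c:ℂ)^2 * (1/4) *
          (((if a = a' then (1:ℂ) else 0) * (if b = b' then 1 else 0)
            - (if a = b' then 1 else 0) * (if b = a' then 1 else 0)) *
           ((if a = a' then (1:ℂ) else 0) * (if e = e' then 1 else 0)
            - (if a = e' then 1 else 0) * (if e = a' then 1 else 0))) := by
      intro a a'
      rw [_root_.map_mul, Complex.conj_ofReal, Pa_real, Pa_apply, Pa_apply]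
      ring
    calc ρ (b, b') (e, e')
        = ∑ a : Fin d, ∑ a' : Fin d,
            ((c:ℂ) * Pa d (a, b) (a', b')) * (starRingEnd ℂ) ((c:ℂ) * Pa d (a, e) (a', e')) := by
          simp only [hρ, ptraceA, outer, hΨ, regroup, Fintype.sum_prod_type]
      _ = (c:ℂ)^2 * (1/4) * ∑ a : Fin d, ∑ a' : Fin d,
            (((if a = a' then (1:ℂ) else 0) * (if b = b' then 1 else 0)
              - (if a = b' then 1 else 0) * (if b = a' then 1 else 0)) *
             ((if a = a' then (1:ℂ) else 0) * (if e = e' then 1 else 0)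
              - (if a = e' then 1 else 0) * (if e = a' then 1 else 0))) := by
          simp only [step, ← Finset.mul_sum]
      _ = (c:ℂ)^2 * (1/4) *
            (((d:ℂ) - 2) * ((if b = b' then 1 else 0) * (if e = e' then 1 else 0))
              + (if b = e then 1 else 0) * (if b' = e' then 1 else 0)) := by
          rw [keylem]
  -- positivity and hermiticity
  have hPSD : ρ.PosSemidef := ptraceA_outer_posSemidef Ψ
  have hherm : ρ.IsHermitian := hPSD.1
  have hspec : specVals ρ = hherm.eigenvalues := by
    unfold specVals
    rw [dif_pos hherm]
  -- the maximally entangled test vector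
  set Ω : Fin d × Fin d → ℂ := fun j => if j.1 = j.2 then 1 else 0 with hΩ
  have hdC : ((d:ℂ)) ≠ 0 := by exact_mod_cast (by positivity : (0:ℝ) < d).ne'
  have hdC1 : ((d:ℂ) - 1) ≠ 0 := by
    intro h
    have : ((d:ℂ)) = 1 := by linear_combination h
    have : (d:ℝ) = 1 := by exact_mod_cast this
    linarith
  have hN : star Ω ⬝ᵥ Ω = ((d:ℝ) : ℂ) := by
    simp [hΩ, dotProduct, Pi.star_apply, apply_ite (star : ℂ → ℂ), Fintype.sum_prod_type,
      Finset.sum_ite_eq, Finset.sum_ite_eq']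
  have ite_sq : ∀ (P : Prop) [Decidable P],
      (if P then (1:ℂ) else 0) * (if P then 1 else 0) = if P then 1 else 0 := by
    intro P _; split_ifs <;> simp
  have keylem2 : ∑ b : Fin d, ∑ b' : Fin d, ∑ e : Fin d, ∑ e' : Fin d,
      ((if b = b' then (1:ℂ) else 0) *
        (((((d:ℂ) - 2) * ((if b = b' then 1 else 0) * (if e = e' then 1 else 0))
          + (if b = e then 1 else 0) * (if b' = e' then 1 else 0))) * (if e = e' then 1 else 0)))
      = (d:ℂ) * ((d:ℂ) - 1)^2 := by
    have expand : ∀ b b' e e' : Fin d,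
        ((if b = b' then (1:ℂ) else 0) *
          (((((d:ℂ) - 2) * ((if b = b' then 1 else 0) * (if e = e' then 1 else 0))
            + (if b = e then 1 else 0) * (if b' = e' then 1 else 0))) * (if e = e' then 1 else 0)))
        = ((d:ℂ) - 2) * (((if b = b' then (1:ℂ) else 0) * (if b = b' then 1 else 0)) *
             ((if e = e' then (1:ℂ) else 0) * (if e = e' then 1 else 0)))
          + (if b = b' then (1:ℂ) else 0) * (if b = e then 1 else 0) * (if b' = e' then 1 else 0)
              * (if e = e' then 1 else 0) := by
      intro b b' e e'; ring
    simp only [expand, ite_sq, Finset.sum_add_distrib]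
    have hA : ∑ b : Fin d, ∑ b' : Fin d, ∑ e : Fin d, ∑ e' : Fin d,
        ((d:ℂ) - 2) * ((if b = b' then (1:ℂ) else 0) * (if e = e' then (1:ℂ) else 0))
        = ((d:ℂ) - 2) * ((d:ℂ) * (d:ℂ)) := by
      simp [Finset.sum_ite_eq, Finset.mul_sum]
      ring
    have hB : ∑ b : Fin d, ∑ b' : Fin d, ∑ e : Fin d, ∑ e' : Fin d,
        (if b = b' then (1:ℂ) else 0) * (if b = e then 1 else 0) * (if b' = e' then 1 else 0)
          * (if e = e' then 1 else 0) = (d:ℂ) := by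
      simp [Finset.sum_ite_eq, Finset.sum_ite_eq', mul_ite, ite_mul, eq_comm]
    rw [hA, hB]
    ring
  have hQ : star Ω ⬝ᵥ ρ *ᵥ Ω = ((((d:ℝ) - 1) / 2 : ℝ) : ℂ) := by
    have step1 : star Ω ⬝ᵥ ρ *ᵥ Ω = ∑ b : Fin d, ∑ b' : Fin d, ∑ e : Fin d, ∑ e' : Fin d,
        (if b = b' then (1:ℂ) else 0) * (ρ (b, b') (e, e') * (if e = e' then 1 else 0)) := by
      simp only [dotProduct, mulVec, Fintype.sum_prod_type, Pi.star_apply, hΩ,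
        apply_ite (star : ℂ → ℂ), star_one, star_zero, Finset.mul_sum]
    rw [step1]
    have step2 : ∀ b b' e e' : Fin d,
        (if b = b' then (1:ℂ) else 0) * (ρ (b, b') (e, e') * (if e = e' then 1 else 0))
        = (c:ℂ)^2 * (1/4) *
            ((if b = b' then (1:ℂ) else 0) *
              (((((d:ℂ) - 2) * ((if b = b' then 1 else 0) * (if e = e' then 1 else 0))
                + (if b = e then 1 else 0) * (if b' = e' then 1 else 0))) * (if e = e' then 1 else 0))) := by
      intro b b' e e'
      rw [rho_apply]
      ring
    have keylem2' : ∑ b : Fin d, ∑ b' : Fin d, ((if b = b' then (1:ℂ) else 0) *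
        ∑ e : Fin d, ∑ e' : Fin d,
          (((((d:ℂ) - 2) * ((if b = b' then 1 else 0) * (if e = e' then 1 else 0))
            + (if b = e then 1 else 0) * (if b' = e' then 1 else 0))) * (if e = e' then 1 else 0)))
        = (d:ℂ) * ((d:ℂ) - 1)^2 := by
      simp only [Finset.mul_sum]
      exact keylem2
    simp only [step2, ← Finset.mul_sum]
    rw [keylem2', hcC]
    push_cast
    field_simp
    ring
  -- lower bound on the largest eigenvalue
  haveI : NeZero d := ⟨by omega⟩
  have hlm_all : ∀ i, hherm.eigenvalues i ≤ lambdaMax ρ := by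
    intro i
    have h := le_ciSup (Finite.bddAbove_range (specVals ρ)) i
    rw [hspec] at h
    simpa [lambdaMax, hspec] using h
  have hray := rayleigh_s8 hherm Ω (lambdaMax ρ) hlm_all
  rw [hQ, hN, Complex.ofReal_re, Complex.ofReal_re] at hray
  have hmain : ((d : ℝ) - 1) / (2 * d) ≤ lambdaMax ρ := by
    rw [div_le_iff₀ (by positivity : (0:ℝ) < 2 * d)]
    nlinarith [hray]
  refine ⟨hmain, ?_⟩
  -- entropy bound
  intro p hp
  have hne : p ≠ 1 := ne_of_gt hp
  obtain ⟨i0, hi0⟩ := Finite.exists_max (fun i => hherm.eigenvalues i)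
  have hmax_eq : lambdaMax ρ = hherm.eigenvalues i0 := by
    have h1 : lambdaMax ρ = ⨆ i, hherm.eigenvalues i := by rw [lambdaMax, hspec]
    rw [h1]
    exact le_antisymm (ciSup_le hi0) (le_ciSup (Finite.bddAbove_range _) i0)
  have hpos0 : (0:ℝ) < ((d:ℝ) - 1) / (2 * d) := by positivity
  have hlb : ((d:ℝ) - 1) / (2 * d) ≤ hherm.eigenvalues i0 := hmax_eq ▸ hmain
  have hev_pos : 0 < hherm.eigenvalues i0 := lt_of_lt_of_le hpos0 hlb
  have hsum_ge : hherm.eigenvalues i0 ^ p ≤ ∑ i, hherm.eigenvalues i ^ p :=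
    Finset.single_le_sum
      (fun i _ => Real.rpow_nonneg (hPSD.eigenvalues_nonneg i) p) (Finset.mem_univ i0)
  have hlog1 : Real.logb 2 (hherm.eigenvalues i0 ^ p) ≤
      Real.logb 2 (∑ i, hherm.eigenvalues i ^ p) :=
    Real.logb_le_logb_of_le one_lt_two (Real.rpow_pos_of_pos hev_pos p) hsum_ge
  have hlog2 : Real.logb 2 (((d:ℝ) - 1) / (2 * d)) ≤ Real.logb 2 (hherm.eigenvalues i0) :=
    Real.logb_le_logb_of_le one_lt_two hpos0 hlb
  have hchain : p * Real.logb 2 (((d:ℝ) - 1) / (2 * d)) ≤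
      Real.logb 2 (∑ i, hherm.eigenvalues i ^ p) := by
    calc p * Real.logb 2 (((d:ℝ) - 1) / (2 * d))
        ≤ p * Real.logb 2 (hherm.eigenvalues i0) :=
          mul_le_mul_of_nonneg_left hlog2 (by linarith)
      _ = Real.logb 2 (hherm.eigenvalues i0 ^ p) := (logb_rpow' hev_pos).symm
      _ ≤ _ := hlog1
  have hSp : Sp p ρ = (1 / (1 - p)) * Real.logb 2 (∑ i, hherm.eigenvalues i ^ p) := by
    rw [Sp, if_neg hne, hspec]
  rw [hSp]
  have hinv : Real.logb 2 (2 * (d:ℝ) / ((d:ℝ) - 1)) = -Real.logb 2 (((d:ℝ) - 1) / (2 * d)) := by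
    rw [← Real.logb_inv, inv_div]
  have hfact : (1:ℝ) / (1 - p) ≤ 0 := by
    apply div_nonpos_of_nonneg_of_nonpos <;> linarith
  calc (1 / (1 - p)) * Real.logb 2 (∑ i, hherm.eigenvalues i ^ p)
      ≤ (1 / (1 - p)) * (p * Real.logb 2 (((d:ℝ) - 1) / (2 * d))) :=
        mul_le_mul_of_nonpos_left hchain hfact
    _ = (p / (p - 1)) * Real.logb 2 (2 * d / ((d : ℝ) - 1)) := by
        rw [hinv]
        have h1p : (1:ℝ) - p ≠ 0 := by linarith
        have hp1 : p - (1:ℝ) ≠ 0 := by linarith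
        field_simp
        ring
end
end

section
/- Let ρ be a density matrix on an n-dimensional complex Hilbert space with n ≥ 2 and largest eigenvalue λ. Then the von Neumann entropy satisfies S(ρ) ≤ h(λ) + (1−λ)·log₂(n−1), where h(λ) = −λ log₂ λ − (1−λ) log₂(1−λ) is the binary entropy function. -/
open scoped BigOperators
open Matrix Kronecker

noncomputable section

open scoped ComplexOrder

lemma key (x s c : ℝ) (hx : 0 ≤ x) (hxs : x ≤ s) (m : ℝ) (hm : 0 < m)
    (hc : c = s / m) :
    -(x * Real.logb 2 x) ≤ (c - x) / Real.log 2 + x * (Real.logb 2 m - Real.logb 2 s) := by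
  rcases eq_or_lt_of_le hx with h0 | h0
  · subst h0
    have hs0 : 0 ≤ s := hxs
    simp only [mul_zero, zero_mul, neg_zero, sub_zero]
    have : 0 ≤ c / Real.log 2 := div_nonneg (by rw [hc]; positivity) (Real.log_nonneg one_le_two)
    linarith
  · have hs : 0 < s := lt_of_lt_of_le h0 hxs
    have hcpos : 0 < c := by rw [hc]; positivity
    have hlog2 : 0 < Real.log 2 := Real.log_pos one_lt_two
    have h1 : Real.log (c / x) ≤ c / x - 1 := Real.log_le_sub_one_of_pos (by positivity)
    have h2 : x * Real.logb 2 (c / x) ≤ (c - x) / Real.log 2 := by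
      rw [Real.logb, div_eq_mul_inv (Real.log _), ← mul_assoc]
      rw [div_eq_mul_inv (c - x)]
      apply mul_le_mul_of_nonneg_right _ (by positivity)
      calc x * Real.log (c / x) ≤ x * (c / x - 1) := by
            exact mul_le_mul_of_nonneg_left h1 hx
        _ = c - x := by field_simp
    have h3 : Real.logb 2 (c / x) = Real.logb 2 s - Real.logb 2 m - Real.logb 2 x := by
      rw [hc, Real.logb_div (by positivity) (ne_of_gt h0), Real.logb_div (ne_of_gt hs) (ne_of_gt hm)]
    nlinarith [h2, h3]

/-- for a density matrix `ρ` on an `n`-dimensional space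
(`n ≥ 2`) with largest eigenvalue `λ`, the von Neumann entropy satisfies
`S(ρ) ≤ h(λ) + (1-λ) log₂(n-1)`. -/
theorem stmt14 (n : ℕ) (hn : 2 ≤ n) (ρ : Matrix (Fin n) (Fin n) ℂ)
    (hρ : ρ.PosSemidef) (htr : ρ.trace = 1) :
    Sp 1 ρ ≤ binEnt (lambdaMax ρ) + (1 - lambdaMax ρ) * Real.logb 2 ((n : ℝ) - 1) := by
  have hH : ρ.IsHermitian := hρ.1
  set e : Fin n → ℝ := hH.eigenvalues with he
  have hspec : specVals ρ = e := by rw [specVals, dif_pos hH]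
  have hnn : ∀ i, 0 ≤ e i := fun i => hρ.eigenvalues_nonneg i
  have hsum : ∑ i, e i = 1 := by
    have hU : star (hH.eigenvectorUnitary : Matrix (Fin n) (Fin n) ℂ) *
        (hH.eigenvectorUnitary : Matrix (Fin n) (Fin n) ℂ) = 1 :=
      Matrix.mem_unitaryGroup_iff'.mp (hH.eigenvectorUnitary).2
    have h1 : ρ.trace = ∑ i, (e i : ℂ) := by
      conv_lhs => rw [hH.spectral_theorem]
      rw [Unitary.conjStarAlgAut_apply, Matrix.trace_mul_cycle, hU, one_mul, Matrix.trace_diagonal]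
      rfl
    rw [h1] at htr
    exact_mod_cast htr
  haveI : Nonempty (Fin n) := ⟨⟨0, by omega⟩⟩
  obtain ⟨j, hj⟩ := Finite.exists_max e
  have hlam : lambdaMax ρ = e j := by
    apply le_antisymm
    · exact ciSup_le (fun i => by rw [hspec]; exact hj i)
    · have := le_ciSup (f := specVals ρ) (Finite.bddAbove_range _) j
      rw [hspec] at this
      rw [lambdaMax, hspec]
      exact this
  set s : ℝ := 1 - e j with hs
  have hserase : ∑ i ∈ Finset.univ.erase j, e i = s := by
    have := Finset.sum_erase_add Finset.univ e (Finset.mem_univ j)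
    rw [hsum] at this
    linarith
  have hsnn : 0 ≤ s := by
    rw [← hserase]
    exact Finset.sum_nonneg (fun i _ => hnn i)
  set m : ℝ := (n : ℝ) - 1 with hmdef
  have hm : 0 < m := by
    have : (2 : ℝ) ≤ (n : ℝ) := by exact_mod_cast hn
    rw [hmdef]; linarith
  set c : ℝ := s / m with hcdef
  set K : ℝ := Real.logb 2 m - Real.logb 2 s with hK
  have hbound : ∑ i ∈ Finset.univ.erase j, -(e i * Real.logb 2 (e i)) ≤
      ∑ i ∈ Finset.univ.erase j, ((c - e i) / Real.log 2 + e i * K) := by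
    apply Finset.sum_le_sum
    intro i hi
    apply key (e i) s c (hnn i) _ m hm hcdef
    rw [← hserase]
    exact Finset.single_le_sum (fun k _ => hnn k) hi
  have hcard : ((Finset.univ.erase j).card : ℝ) = m := by
    rw [Finset.card_erase_of_mem (Finset.mem_univ j), Finset.card_univ, Fintype.card_fin]
    rw [hmdef]
    have : (1:ℕ) ≤ n := by omega
    push_cast [Nat.cast_sub this]
    ring
  have hsumrhs : ∑ i ∈ Finset.univ.erase j, ((c - e i) / Real.log 2 + e i * K) = s * K := by
    rw [Finset.sum_add_distrib, ← Finset.sum_div, ← Finset.sum_mul, hserase,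
      Finset.sum_sub_distrib, Finset.sum_const, hserase, nsmul_eq_mul, hcard]
    have : m * c - s = 0 := by rw [hcdef]; field_simp; ring
    rw [this, zero_div, zero_add]
  have hSp : Sp 1 ρ = ∑ i, -(e i * Real.logb 2 (e i)) := by
    rw [Sp, if_pos rfl, hspec]
  have hsplit : ∑ i, -(e i * Real.logb 2 (e i)) =
      (∑ i ∈ Finset.univ.erase j, -(e i * Real.logb 2 (e i))) + -(e j * Real.logb 2 (e j)) :=
    (Finset.sum_erase_add Finset.univ _ (Finset.mem_univ j)).symm
  rw [hSp, hsplit, hlam, binEnt]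
  have h1s : 1 - e j = s := rfl
  rw [h1s]
  have hsK : s * K = s * Real.logb 2 m - s * Real.logb 2 s := by rw [hK]; ring
  have hfinal : ∑ i ∈ Finset.univ.erase j, -(e i * Real.logb 2 (e i)) ≤
      s * Real.logb 2 m - s * Real.logb 2 s := by
    rw [← hsK, ← hsumrhs]; exact hbound
  linarith [hfinal]
end
end

section
/- Let d ≥ 2 and let {ψ_i ⊗ φ_i}_{i=1}^{2d−1} be pairwise orthogonal product unit vectors in ℂ^d ⊗ ℂ^d such that for every subset S ⊆ {1,…,2d−1} with |S| ≥ d, both {ψ_i : i ∈ S} and {φ_i : i ∈ S} span ℂ^d. Then this set is an unextendible product basis: if a product vector a ⊗ b (a, b ∈ ℂ^d) is orthogonal to ψ_i ⊗ φ_i for all i, then a = 0 or b = 0. -/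
open scoped BigOperators
open Matrix Kronecker

noncomputable section

/-- Auxiliary: a vector orthogonal to a spanning set is zero. -/
lemma orth_span_zero {d : ℕ} (a : Fin d → ℂ) {s : Set (Fin d → ℂ)}
    (hspan : Submodule.span ℂ s = ⊤)
    (h : ∀ v ∈ s, ∑ x, (starRingEnd ℂ) (v x) * a x = 0) : a = 0 := by
  let g : (Fin d → ℂ) →ₗ[ℂ] ℂ :=
    { toFun := fun v => ∑ x, v x * (starRingEnd ℂ) (a x)
      map_add' := by intro u v; simp [add_mul, Finset.sum_add_distrib]
      map_smul' := by intro c v; simp [mul_assoc, Finset.mul_sum]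
      }
  have hg : ∀ v ∈ s, g v = 0 := by
    intro v hv
    have := h v hv
    have h2 : (starRingEnd ℂ) (∑ x, (starRingEnd ℂ) (v x) * a x) = 0 := by
      rw [this]; simp
    simpa [g, map_sum, mul_comm] using h2
  have hker : Submodule.span ℂ s ≤ LinearMap.ker g := by
    rw [Submodule.span_le]; intro v hv; exact hg v hv
  rw [hspan, top_le_iff] at hker
  have hga : g a = 0 := by
    have : a ∈ LinearMap.ker g := by rw [hker]; trivial
    exact this
  have hsum : ∑ x, Complex.normSq (a x) = 0 := by
    have : ((∑ x, Complex.normSq (a x) : ℝ) : ℂ) = 0 := by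
      push_cast
      simpa [g, Complex.mul_conj] using hga
    exact_mod_cast this
  funext x
  have hx := (Finset.sum_eq_zero_iff_of_nonneg
    (fun i _ => Complex.normSq_nonneg (a i))).mp hsum x (Finset.mem_univ x)
  exact Complex.normSq_eq_zero.mp hx

/-- `2d-1` pairwise orthogonal product unit vectors
`ψᵢ ⊗ φᵢ` in `ℂ^d ⊗ ℂ^d` such that every `d` of them have full local rank on
both sides form an unextendible product basis: any product vector orthogonal
to all of them has a vanishing factor. -/
theorem stmt16 (d : ℕ) (hd : 2 ≤ d)
    (ψ φ : Fin (2 * d - 1) → (Fin d → ℂ))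
    (hunit : ∀ i, (∑ x, ‖ψ i x‖ ^ 2 = 1) ∧ (∑ x, ‖φ i x‖ ^ 2 = 1))
    (horth : ∀ i j, i ≠ j →
      star (tensorVec (ψ i) (φ i)) ⬝ᵥ tensorVec (ψ j) (φ j) = 0)
    (hspan : ∀ S : Finset (Fin (2 * d - 1)), d ≤ S.card →
      Submodule.span ℂ (ψ '' (S : Set (Fin (2 * d - 1)))) = ⊤ ∧
      Submodule.span ℂ (φ '' (S : Set (Fin (2 * d - 1)))) = ⊤)
    (a b : Fin d → ℂ)
    (horthab : ∀ i, star (tensorVec (ψ i) (φ i)) ⬝ᵥ tensorVec a b = 0) :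
    a = 0 ∨ b = 0 := by
  classical
  -- factorize the orthogonality condition
  have hfact : ∀ i, (∑ x, (starRingEnd ℂ) (ψ i x) * a x) *
      (∑ y, (starRingEnd ℂ) (φ i y) * b y) = 0 := by
    intro i
    have := horthab i
    rw [show star (tensorVec (ψ i) (φ i)) ⬝ᵥ tensorVec a b
        = (∑ x, (starRingEnd ℂ) (ψ i x) * a x) *
          (∑ y, (starRingEnd ℂ) (φ i y) * b y) from ?_] at this
    · exact this
    · simp only [dotProduct, tensorVec, Pi.star_apply, Finset.sum_mul_sum]
      rw [Fintype.sum_prod_type]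
      refine Finset.sum_congr rfl fun x _ => Finset.sum_congr rfl fun y _ => ?_
      simp only [star_mul', starRingEnd_apply]; ring
  set S : Finset (Fin (2 * d - 1)) :=
    Finset.filter (fun i => ∑ x, (starRingEnd ℂ) (ψ i x) * a x = 0) Finset.univ with hS
  by_cases hcard : d ≤ S.card
  · left
    refine orth_span_zero a ((hspan S hcard).1) ?_
    rintro v ⟨i, hi, rfl⟩
    exact (Finset.mem_filter.mp hi).2
  · right
    push_neg at hcard
    have hcardc : d ≤ Sᶜ.card := by
      have h1 : Sᶜ.card = (2 * d - 1) - S.card := by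
        rw [Finset.card_compl]; simp
      omega
    refine orth_span_zero b ((hspan Sᶜ hcardc).2) ?_
    rintro v ⟨i, hi, rfl⟩
    have hi' : ¬ (∑ x, (starRingEnd ℂ) (ψ i x) * a x = 0) := by
      have := Finset.mem_compl.mp hi
      simpa [hS] using this
    rcases mul_eq_zero.mp (hfact i) with h | h
    · exact absurd h hi'
    · exact h
end
end

section
/- Let d ≥ 2 and let {ψ_i ⊗ φ_i}_{i=1}^{2d−1} and {ψ'_j ⊗ φ'_j}_{j=1}^{2d−1} be two families of pairwise orthogonal product unit vectors in ℂ^d ⊗ ℂ^d, each with the property that for every subset S of indices with |S| ≥ d, both the first factors {ψ_i : i ∈ S} (resp. {ψ'_j : j ∈ S}) and the second factors {φ_i : i ∈ S} (resp. {φ'_j : j ∈ S}) span ℂ^d. Then the family {(ψ_i ⊗ ψ'_j) ⊗ (φ_i ⊗ φ'_j)}_{i,j=1}^{2d−1}, regarded as product vectors in (ℂ^d ⊗ ℂ^d)_{AA'} ⊗ (ℂ^d ⊗ ℂ^d)_{BB'}, is an unextendible product basis: any vector of the form a ⊗ b with a ∈ ℂ^d ⊗ ℂ^d, b ∈ ℂ^d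 ⊗ ℂ^d orthogonal to all (ψ_i ⊗ ψ'_j) ⊗ (φ_i ⊗ φ'_j) satisfies a = 0 or b = 0. -/
open scoped BigOperators
open Matrix Kronecker

noncomputable section

open scoped ComplexOrder in
private lemma orth_span {d n : ℕ} (f : Fin n → Fin d → ℂ) (S : Finset (Fin n))
    (hspan : Submodule.span ℂ (f '' (S : Set (Fin n))) = ⊤) (u : Fin d → ℂ)
    (h : ∀ i ∈ S, star (f i) ⬝ᵥ u = 0) : u = 0 := by
  have key : ∀ v ∈ Submodule.span ℂ (f '' (S : Set (Fin n))), star v ⬝ᵥ u = 0 := by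
    intro v hv
    induction hv using Submodule.span_induction with
    | mem v hvm => obtain ⟨i, hi, rfl⟩ := hvm; exact h i hi
    | zero => simp
    | add x y _ _ hx hy => rw [star_add, add_dotProduct, hx, hy, add_zero]
    | smul c x _ hx => rw [star_smul, smul_dotProduct, hx, smul_zero]
  exact dotProduct_star_self_eq_zero.mp (key u (by rw [hspan]; trivial))

private lemma dot_factor {X Y : Type*} [Fintype X] [Fintype Y]
    (u a : X → ℂ) (v b : Y → ℂ) :
    star (tensorVec u v) ⬝ᵥ tensorVec a b = (star u ⬝ᵥ a) * (star v ⬝ᵥ b) := by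
  simp only [dotProduct, Finset.sum_mul_sum, Fintype.sum_prod_type, tensorVec,
    Pi.star_apply, star_mul']
  exact Finset.sum_congr rfl fun x _ => Finset.sum_congr rfl fun y _ => by ring

private lemma dot_split {X Y : Type*} [Fintype X] [Fintype Y]
    (u : X → ℂ) (v : Y → ℂ) (c : X × Y → ℂ) :
    star (tensorVec u v) ⬝ᵥ c = star v ⬝ᵥ (fun y => ∑ x, star (u x) * c (x, y)) := by
  simp only [dotProduct, Fintype.sum_prod_type_right, tensorVec, Pi.star_apply,
    star_mul', Finset.mul_sum]
  exact Finset.sum_congr rfl fun y _ => Finset.sum_congr rfl fun x _ => by ring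

/-- the tensor product of two families as in Statement 16 is
again an unextendible product basis with respect to the cut `AA' : BB'`. -/
theorem stmt17 (d : ℕ) (hd : 2 ≤ d)
    (ψ φ ψ' φ' : Fin (2 * d - 1) → (Fin d → ℂ))
    (hunit : ∀ i, (∑ x, ‖ψ i x‖ ^ 2 = 1) ∧ (∑ x, ‖φ i x‖ ^ 2 = 1))
    (hunit' : ∀ i, (∑ x, ‖ψ' i x‖ ^ 2 = 1) ∧ (∑ x, ‖φ' i x‖ ^ 2 = 1))
    (horth : ∀ i j, i ≠ j →
      star (tensorVec (ψ i) (φ i)) ⬝ᵥ tensorVec (ψ j) (φ j) = 0)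
    (horth' : ∀ i j, i ≠ j →
      star (tensorVec (ψ' i) (φ' i)) ⬝ᵥ tensorVec (ψ' j) (φ' j) = 0)
    (hspan : ∀ S : Finset (Fin (2 * d - 1)), d ≤ S.card →
      Submodule.span ℂ (ψ '' (S : Set (Fin (2 * d - 1)))) = ⊤ ∧
      Submodule.span ℂ (φ '' (S : Set (Fin (2 * d - 1)))) = ⊤)
    (hspan' : ∀ S : Finset (Fin (2 * d - 1)), d ≤ S.card →
      Submodule.span ℂ (ψ' '' (S : Set (Fin (2 * d - 1)))) = ⊤ ∧
      Submodule.span ℂ (φ' '' (S : Set (Fin (2 * d - 1)))) = ⊤)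
    (a b : Fin d × Fin d → ℂ)
    (horthab : ∀ i j,
      star (tensorVec (tensorVec (ψ i) (ψ' j)) (tensorVec (φ i) (φ' j)))
        ⬝ᵥ tensorVec a b = 0) :
    a = 0 ∨ b = 0 := by
  classical
  by_cases ha : a = 0
  · exact Or.inl ha
  right
  have hcardn : Fintype.card (Fin (2 * d - 1)) = 2 * d - 1 := by simp
  -- the "partial inner products"
  set v : Fin (2 * d - 1) → Fin d → ℂ := fun i y => ∑ x, star (ψ i x) * a (x, y) with hv
  set w : Fin (2 * d - 1) → Fin d → ℂ := fun i y => ∑ x, star (φ i x) * b (x, y) with hw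
  have hprod : ∀ i j, (star (ψ' j) ⬝ᵥ v i) * (star (φ' j) ⬝ᵥ w i) = 0 := by
    intro i j
    have h0 := horthab i j
    rw [dot_factor, dot_split (ψ i) (ψ' j) a, dot_split (φ i) (φ' j) b] at h0
    exact h0
  -- index sets where the left factors do not vanish
  set I : Finset (Fin (2 * d - 1)) := Finset.univ.filter (fun i => ¬ v i = 0) with hI
  have hIcard : d ≤ I.card := by
    by_contra hlt
    set K : Finset (Fin (2 * d - 1)) := Finset.univ.filter (fun i => v i = 0) with hK
    have hsum : K.card + I.card = 2 * d - 1 := by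
      rw [hK, hI, Finset.card_filter_add_card_filter_not, Finset.card_univ, hcardn]
    have hKcard : d ≤ K.card := by omega
    apply ha
    funext p
    have hcol : (fun x => a (x, p.2)) = 0 :=
      orth_span ψ K (hspan K hKcard).1 _ (fun i hi => by
        have h0 : v i = 0 := (Finset.mem_filter.mp hi).2
        have h1 := congrFun h0 p.2
        simpa [hv, dotProduct] using h1)
    simpa using congrFun hcol p.1
  -- for each i in I, w i = 0
  have hw0 : ∀ i ∈ I, w i = 0 := by
    intro i hi
    have hvne : ¬ v i = 0 := (Finset.mem_filter.mp hi).2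
    set J : Finset (Fin (2 * d - 1)) :=
      Finset.univ.filter (fun j => ¬ star (ψ' j) ⬝ᵥ v i = 0) with hJ
    have hJcard : d ≤ J.card := by
      by_contra hlt
      set K : Finset (Fin (2 * d - 1)) :=
        Finset.univ.filter (fun j => star (ψ' j) ⬝ᵥ v i = 0) with hK
      have hsum : K.card + J.card = 2 * d - 1 := by
        rw [hK, hJ, Finset.card_filter_add_card_filter_not, Finset.card_univ, hcardn]
      have hKcard : d ≤ K.card := by omega
      exact hvne (orth_span ψ' K (hspan' K hKcard).1 (v i)
        (fun j hj => (Finset.mem_filter.mp hj).2))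
    exact orth_span φ' J (hspan' J hJcard).2 (w i) (fun j hj => by
      rcases mul_eq_zero.mp (hprod i j) with h0 | h0
      · exact absurd h0 (Finset.mem_filter.mp hj).2
      · exact h0)
  -- conclude b = 0
  funext p
  have hcol : (fun x => b (x, p.2)) = 0 :=
    orth_span φ I (hspan I hIcard).2 _ (fun i hi => by
      have h1 := congrFun (hw0 i hi) p.2
      simpa [hw, dotProduct] using h1)
  simpa using congrFun hcol p.1
end
end

section
/- Let τ be a density matrix on ℂ^d ⊗ ℂ^d (a Choi–Jamiołkowski state) and define the associated channel on d×d density matrices by Λ(ρ) = d·Tr_A[(ρ^T ⊗ I_d)·τ], where ρ^T is the transpose in the standard basis and the partial trace is over the first tensor factor. If the orthogonal complement of the range of τ contains no nonzero product vector, then for every unit vector φ ∈ ℂ^d, the output Λ(|φ⟩⟨φ|) has rank d; equivalently, its Rényi-0 entropy S_0(Λ(|φ⟩⟨φ|)) = log₂ d. -/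
open scoped BigOperators
open Matrix Kronecker

noncomputable section

open scoped ComplexOrder

/-- if the orthogonal complement of the range of the
Choi–Jamiołkowski state `τ` (equivalently, the kernel of `τ`, since `τ ≥ 0`)
contains no nonzero product vector, then for every unit vector `φ` the output
`Λ(|φ⟩⟨φ|) = d·Tr_A[(|φ⟩⟨φ|^T ⊗ I)τ]` has rank `d`; equivalently its Rényi-0
entropy `log₂ rank` equals `log₂ d`. -/
theorem stmt18 (d : ℕ)
    (τ : Matrix (Fin d × Fin d) (Fin d × Fin d) ℂ)
    (hpsd : τ.PosSemidef) (htr : τ.trace = 1)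
    (hnoprod : ∀ a b : Fin d → ℂ, τ.mulVec (tensorVec a b) = 0 → a = 0 ∨ b = 0)
    (φ : Fin d → ℂ) (hφ : ∑ i, ‖φ i‖ ^ 2 = 1) :
    (choiOutput τ φ).rank = d ∧
      Real.logb 2 ((choiOutput τ φ).rank) = Real.logb 2 d := by
  classical
  -- φ is nonzero
  have hφne : φ ≠ 0 := by
    intro h
    rw [h] at hφ
    simp at hφ
  -- the isometry-like matrix B with B (k,l) j = conj (φ k) * δ_{l j}
  set B : Matrix (Fin d × Fin d) (Fin d) ℂ :=
    fun p j => (starRingEnd ℂ) (φ p.1) * (if p.2 = j then 1 else 0) with hB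
  have hBmulVec : ∀ x : Fin d → ℂ, B *ᵥ x = tensorVec (star φ) x := by
    intro x
    funext p
    simp [hB, Matrix.mulVec, dotProduct, tensorVec, mul_ite, mul_assoc,
      Pi.star_apply]
  -- key identity
  have hkey : choiOutput τ φ = (d : ℂ) • (Bᴴ * τ * B) := by
    ext j j'
    simp only [Matrix.smul_apply, Matrix.mul_apply, Matrix.conjTranspose_apply]
    simp only [choiOutput, ptraceA, Matrix.smul_apply, Matrix.mul_apply,
      Matrix.kroneckerMap_apply, Matrix.transpose_apply, outer, Matrix.one_apply,
      Matrix.conjTranspose_apply, hB, Fintype.card_fin, smul_eq_mul]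
    congr 1
    simp only [star_mul', star_one, star_zero, starRingEnd_self_apply,
      Fintype.sum_prod_type, mul_ite, ite_mul, mul_zero, zero_mul, mul_one,
      one_mul, Finset.sum_ite_eq, Finset.sum_ite_eq', Finset.mem_univ, if_true,
      Finset.sum_mul, Finset.mul_sum, apply_ite star]
    refine Finset.sum_congr rfl fun i _ => Finset.sum_congr rfl fun k _ => ?_
    simp only [RCLike.star_def, Complex.conj_conj]
    ring
  -- positive definiteness of the output
  have hMpsd : (Bᴴ * τ * B).PosSemidef := hpsd.conjTranspose_mul_mul_same B
  have hdpos : 0 < d := by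
    rcases Function.ne_iff.mp hφne with ⟨i, -⟩
    exact i.pos
  have hΛpd : (choiOutput τ φ).PosDef := by
    rw [hkey]
    refine Matrix.posDef_iff_dotProduct_mulVec.mpr ⟨?_, ?_⟩
    · rw [Matrix.IsHermitian, Matrix.conjTranspose_smul, hMpsd.isHermitian.eq]
      norm_num
    · intro x hx
      have hw : B *ᵥ x ≠ 0 := by
        rw [hBmulVec]
        intro h0
        apply hx
        funext l
        rcases Function.ne_iff.mp hφne with ⟨i, hi⟩
        have := congrFun h0 (i, l)
        simp only [tensorVec, Pi.star_apply, Pi.zero_apply] at this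
        rcases mul_eq_zero.mp this with h | h
        · exact absurd (star_eq_zero.mp h) hi
        · exact h
      have hτw : τ *ᵥ (B *ᵥ x) ≠ 0 := by
        rw [hBmulVec]
        intro h0
        rcases hnoprod _ _ h0 with h | h
        · rcases Function.ne_iff.mp hφne with ⟨i, hi⟩
          exact hi (star_eq_zero.mp (congrFun h i))
        · rw [hBmulVec, h] at hw
          exact hw (by funext p; simp [tensorVec])
      have hpos : 0 < star x ⬝ᵥ (Bᴴ * τ * B) *ᵥ x := by
        have hnn : 0 ≤ star x ⬝ᵥ (Bᴴ * τ * B) *ᵥ x := hMpsd.dotProduct_mulVec_nonneg x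
        rcases hnn.lt_or_eq with h | h
        · exact h
        · exfalso
          apply hτw
          have h0 : star (B *ᵥ x) ⬝ᵥ τ *ᵥ (B *ᵥ x) = 0 := by
            have : star x ⬝ᵥ (Bᴴ * τ * B) *ᵥ x
                = star (B *ᵥ x) ⬝ᵥ τ *ᵥ (B *ᵥ x) := by
              rw [← Matrix.mulVec_mulVec, ← Matrix.mulVec_mulVec,
                Matrix.dotProduct_mulVec (star x), Matrix.vecMul_conjTranspose,
                star_star]
            rw [← this, ← h]
          exact (hpsd.dotProduct_mulVec_zero_iff _).mp h0
      rw [Matrix.smul_mulVec, dotProduct_smul]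
      have hd : (0 : ℂ) < (d : ℂ) := by
        rw [show ((d : ℕ) : ℂ) = ((d : ℝ) : ℂ) by push_cast; ring]
        rw [Complex.zero_lt_real]
        exact_mod_cast hdpos
      exact mul_pos hd hpos
  have hrank : (choiOutput τ φ).rank = d := by
    rw [Matrix.rank_of_isUnit _ hΛpd.isUnit, Fintype.card_fin]
  exact ⟨hrank, by rw [hrank]⟩
end
end

section
/- Let d ≥ 2 and let {ψ_i ⊗ φ_i}_{i=1}^{2d−1} be pairwise orthogonal product unit vectors in ℂ^d ⊗ ℂ^d such that for every subset S of indices with |S| ≥ d, both {ψ_i : i ∈ S} and {φ_i : i ∈ S} span ℂ^d. Let τ = P_S/(2d−1), where P_S is the orthogonal projector onto the span of these vectors, and let Λ(ρ) = d·Tr_A[(ρ^T ⊗ I_d)·τ] be the associated entanglement-breaking channel. Then the minimal output Rényi-0 entropy is additive for two copies: S_0^min(Λ ⊗ Λ) = 2·log₂ d = 2·S_0^min(Λ); that is, for every unit vector Φ ∈ ℂ^{d²} the output (Λ ⊗ Λ)(|Φ⟩⟨Φ|) has full rank d². -/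
open scoped BigOperators
open Matrix Kronecker

noncomputable section

section AuxForStmt19

private lemma aux_ne_zero_of_unit {γ : Type*} [Fintype γ] {v : γ → ℂ}
    (h : ∑ x, ‖v x‖ ^ 2 = 1) : v ≠ 0 := by
  intro h0; rw [h0] at h; simp at h

/-- If the `v i`, `i ∈ s`, span everything and `w ⬝ᵥ v i = 0` for all of them, `w = 0`. -/
private lemma aux_dot_span_zero {n ι : Type*} [Fintype n] [DecidableEq n]
    {v : ι → n → ℂ} {s : Set ι}
    (hspan : Submodule.span ℂ (v '' s) = ⊤) {w : n → ℂ}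
    (h : ∀ i ∈ s, w ⬝ᵥ v i = 0) : w = 0 := by
  let K : Submodule ℂ (n → ℂ) :=
    { carrier := {u | w ⬝ᵥ u = 0}
      add_mem' := fun ha hb => by
        simp only [Set.mem_setOf_eq, dotProduct_add] at *; rw [ha, hb, add_zero]
      zero_mem' := by simp [dotProduct]
      smul_mem' := fun c u hu => by
        simp only [Set.mem_setOf_eq] at *
        rw [dotProduct_smul, hu, smul_zero] }
  have hK : ∀ u, u ∈ K := by
    have : Submodule.span ℂ (v '' s) ≤ K := Submodule.span_le.mpr (by
      rintro _ ⟨i, hi, rfl⟩; exact h i hi)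
    rw [hspan] at this
    exact fun u => this Submodule.mem_top
  funext j
  have := hK (Pi.single j 1)
  simpa [K, dotProduct, Pi.single_apply] using this

/-- Conjugate-linear variant: if `star (v i) ⬝ᵥ x = 0` for a spanning family, `x = 0`. -/
private lemma aux_star_dot_span_zero {n ι : Type*} [Fintype n] [DecidableEq n]
    {v : ι → n → ℂ} {s : Set ι}
    (hspan : Submodule.span ℂ (v '' s) = ⊤) {x : n → ℂ}
    (h : ∀ i ∈ s, star (v i) ⬝ᵥ x = 0) : x = 0 := by
  let K : Submodule ℂ (n → ℂ) :=
    { carrier := {u | star u ⬝ᵥ x = 0}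
      add_mem' := fun ha hb => by
        simp only [Set.mem_setOf_eq, star_add, add_dotProduct] at *; rw [ha, hb, add_zero]
      zero_mem' := by simp [dotProduct]
      smul_mem' := fun c u hu => by
        simp only [Set.mem_setOf_eq] at *
        rw [star_smul, smul_dotProduct, hu, smul_zero] }
  have hK : ∀ u, u ∈ K := by
    have : Submodule.span ℂ (v '' s) ≤ K := Submodule.span_le.mpr (by
      rintro _ ⟨i, hi, rfl⟩; exact h i hi)
    rw [hspan] at this
    exact fun u => this Submodule.mem_top
  funext j
  have := hK (Pi.single j 1)
  simpa [K, dotProduct, Pi.single_apply, apply_ite] using this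

private lemma aux_good_span {d : ℕ} (hd : 2 ≤ d) {ψ φ : Fin (2 * d - 1) → (Fin d → ℂ)}
    (hspan : ∀ S : Finset (Fin (2 * d - 1)), d ≤ S.card →
      Submodule.span ℂ (ψ '' (S : Set (Fin (2 * d - 1)))) = ⊤ ∧
      Submodule.span ℂ (φ '' (S : Set (Fin (2 * d - 1)))) = ⊤)
    (P : Fin (2 * d - 1) → Prop)
    (hP : Submodule.span ℂ (ψ '' {i | ¬ P i}) ≠ ⊤) :
    Submodule.span ℂ (φ '' {i | P i}) = ⊤ := by
  classical
  have hcoe : ∀ Q : Fin (2*d-1) → Prop, ∀ _ : DecidablePred Q,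
      ((Finset.univ.filter Q : Finset (Fin (2*d-1))) : Set (Fin (2*d-1))) = {i | Q i} := by
    intro Q _; ext i; simp
  have hT : ¬ (d ≤ (Finset.univ.filter (fun i => ¬ P i)).card) := by
    intro hle
    exact hP (by rw [← hcoe _ _]; exact (hspan _ hle).1)
  have hsum := Finset.card_filter_add_card_filter_not
    (s := (Finset.univ : Finset (Fin (2*d-1)))) (p := P)
  have hcard : (Finset.univ : Finset (Fin (2*d-1))).card = 2*d-1 := by simp
  have hS : d ≤ (Finset.univ.filter P).card := by omega
  rw [← hcoe P _]
  exact (hspan _ hS).2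

private lemma aux_choiOutput_formula {m n ι : Type*}
    [Fintype m] [Fintype n] [Fintype ι] [DecidableEq n]
    (c : ℂ) (A : ι → m → ℂ) (B : ι → n → ℂ) (Φ : m → ℂ) :
    choiOutput (c • ∑ k, outer (tensorVec (A k) (B k))) Φ
      = ((Fintype.card m : ℂ) * c) • ∑ k,
          ((∑ a, Φ a * A k a) * (starRingEnd ℂ) (∑ a, Φ a * A k a)) • outer (B k) := by
  classical
  ext b b'
  simp only [choiOutput, ptraceA, Matrix.smul_apply, Matrix.sum_apply, Matrix.mul_apply,
    Matrix.kroneckerMap_apply, Matrix.one_apply, Matrix.transpose_apply, Matrix.smul_apply,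
    smul_eq_mul, outer, tensorVec, mul_ite, mul_one, mul_zero, ite_mul, zero_mul]
  have collapse : ∀ g : m → m × n → ℂ,
      (∑ x : m, ∑ x1 : m × n, if b = x1.2 then g x x1 else 0)
        = ∑ x : m, ∑ a : m, g x (a, b) := by
    intro g
    refine Finset.sum_congr rfl fun x _ => ?_
    rw [Fintype.sum_prod_type]
    refine Finset.sum_congr rfl fun a _ => ?_
    simp [Finset.sum_ite_eq]
  rw [collapse]
  simp only [map_sum, _root_.map_mul, Finset.sum_mul, Finset.mul_sum]
  conv_lhs => enter [2, x]; rw [Finset.sum_comm]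
  rw [Finset.sum_comm]
  refine Finset.sum_congr rfl fun k _ => ?_
  refine Finset.sum_congr rfl fun x _ => ?_
  refine Finset.sum_congr rfl fun a _ => ?_
  ring

private lemma aux_rank_full {ι n : Type*} [Fintype ι] [Fintype n] [DecidableEq n]
    (c : ℂ) (r : ℝ) (hc : c = (r : ℂ)) (hr : 0 < r) (z : ι → ℂ) (B : ι → n → ℂ)
    (hker : ∀ x : n → ℂ, (∀ k, z k ≠ 0 → star (B k) ⬝ᵥ x = 0) → x = 0) :
    (c • ∑ k, (z k * (starRingEnd ℂ) (z k)) • outer (B k)).rank = Fintype.card n := by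
  classical
  set M : Matrix n n ℂ := c • ∑ k, (z k * (starRingEnd ℂ) (z k)) • outer (B k) with hM
  have hker' : LinearMap.ker M.mulVecLin = ⊥ := by
    rw [LinearMap.ker_eq_bot']
    intro x hx
    have hx' : M.mulVec x = 0 := hx
    have hq : star x ⬝ᵥ M.mulVec x = 0 := by rw [hx']; simp
    have hform : star x ⬝ᵥ M.mulVec x
        = (↑(r * ∑ k, Complex.normSq (z k) * Complex.normSq (star (B k) ⬝ᵥ x)) : ℂ) := by
      rw [hM]
      have h1 : ∀ k, star x ⬝ᵥ ((z k * (starRingEnd ℂ) (z k)) • outer (B k)).mulVec x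
          = (↑(Complex.normSq (z k) * Complex.normSq (star (B k) ⬝ᵥ x)) : ℂ) := by
        intro k
        have hst : star (B k) ⬝ᵥ x = ∑ l, (starRingEnd ℂ) (B k l) * x l := by
          simp [dotProduct, RCLike.star_def]
        have houter : star x ⬝ᵥ (outer (B k)).mulVec x
            = (↑(Complex.normSq (star (B k) ⬝ᵥ x)) : ℂ) := by
          rw [hst]
          have : star x ⬝ᵥ (outer (B k)).mulVec x
              = (∑ j, (starRingEnd ℂ) (x j) * B k j) * (∑ l, (starRingEnd ℂ) (B k l) * x l) := by
            simp only [dotProduct, Matrix.mulVec, dotProduct, outer, Pi.star_apply,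
              Finset.sum_mul, Finset.mul_sum]
            rw [Finset.sum_comm]
            apply Finset.sum_congr rfl; intro j _
            apply Finset.sum_congr rfl; intro l _
            simp only [RCLike.star_def]
            ring
          rw [this]
          have h2 : (∑ j, (starRingEnd ℂ) (x j) * B k j)
              = (starRingEnd ℂ) (∑ l, (starRingEnd ℂ) (B k l) * x l) := by
            rw [map_sum]; apply Finset.sum_congr rfl; intro l _; simp [mul_comm]
          rw [h2, ← Complex.normSq_eq_conj_mul_self]
        rw [Matrix.smul_mulVec, dotProduct_smul, houter, smul_eq_mul,
          Complex.mul_conj]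
        push_cast
        ring
      have hsum_mv : (∑ k, (z k * (starRingEnd ℂ) (z k)) • outer (B k)) *ᵥ x
          = ∑ k, ((z k * (starRingEnd ℂ) (z k)) • outer (B k)) *ᵥ x := by
        ext j
        simp only [Matrix.mulVec, dotProduct, Matrix.sum_apply, Finset.sum_mul,
          Finset.sum_apply]
        rw [Finset.sum_comm]
      have hds : star x ⬝ᵥ (∑ k, ((z k * (starRingEnd ℂ) (z k)) • outer (B k)) *ᵥ x)
          = ∑ k, star x ⬝ᵥ (((z k * (starRingEnd ℂ) (z k)) • outer (B k)) *ᵥ x) := by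
        simp only [dotProduct, Finset.sum_apply, Finset.mul_sum]
        rw [Finset.sum_comm]
      rw [Matrix.smul_mulVec, dotProduct_smul, hsum_mv, hds]
      simp_rw [h1]
      rw [hc]
      push_cast
      rw [smul_eq_mul, Finset.mul_sum]
    rw [hform] at hq
    have hq' : r * ∑ k, Complex.normSq (z k) * Complex.normSq (star (B k) ⬝ᵥ x) = 0 := by
      exact_mod_cast hq
    have hsum : ∑ k, Complex.normSq (z k) * Complex.normSq (star (B k) ⬝ᵥ x) = 0 := by
      rcases mul_eq_zero.mp hq' with h | h
      · exact absurd h (ne_of_gt hr)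
      · exact h
    have hterm : ∀ k ∈ Finset.univ,
        Complex.normSq (z k) * Complex.normSq (star (B k) ⬝ᵥ x) = 0 := by
      refine (Finset.sum_eq_zero_iff_of_nonneg ?_).mp hsum
      intro k _; exact mul_nonneg (Complex.normSq_nonneg _) (Complex.normSq_nonneg _)
    apply hker x
    intro k hk
    have := hterm k (Finset.mem_univ k)
    rcases mul_eq_zero.mp this with h | h
    · exact absurd (Complex.normSq_eq_zero.mp h) hk
    · exact Complex.normSq_eq_zero.mp h
  have := LinearMap.finrank_range_add_finrank_ker M.mulVecLin
  rw [hker', finrank_bot] at this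
  rw [Matrix.rank]
  simp only [Module.finrank_fintype_fun_eq_card] at this
  omega

private lemma aux_regroup_decomp {α ι : Type*} [Fintype α] [Fintype ι]
    (c : ℂ) (ψ φ : ι → α → ℂ)
    (τ : Matrix (α × α) (α × α) ℂ) (hτ : τ = c • ∑ i, outer (tensorVec (ψ i) (φ i))) :
    regroupMat (τ ⊗ₖ τ)
      = (c * c) • ∑ k : ι × ι,
          outer (tensorVec (tensorVec (ψ k.1) (ψ k.2)) (tensorVec (φ k.1) (φ k.2))) := by
  subst hτ
  ext x y
  simp only [regroupMat, Matrix.kroneckerMap_apply, Matrix.smul_apply, Matrix.sum_apply,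
    outer, tensorVec, smul_eq_mul]
  rw [Fintype.sum_prod_type]
  rw [Finset.mul_sum]
  simp only [Finset.mul_sum, Finset.sum_mul]
  rw [Finset.sum_comm]
  refine Finset.sum_congr rfl fun i _ => ?_
  refine Finset.sum_congr rfl fun j _ => ?_
  simp only [_root_.map_mul]
  ring

end AuxForStmt19


/-- let `τ = P_S/(2d-1)` be the Choi–Jamiołkowski state of the
entanglement-breaking channel determined by a UPB as in Statement 16. Then
the minimal output Rényi-0 entropy is additive for two copies:
every output of `Λ ⊗ Λ` has full rank `d²`, the minimal output Rényi-0
entropy of `Λ ⊗ Λ` is `2 log₂ d`, and that of `Λ` is `log₂ d`. -/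
theorem stmt19 (d : ℕ) (hd : 2 ≤ d)
    (ψ φ : Fin (2 * d - 1) → (Fin d → ℂ))
    (hunit : ∀ i, (∑ x, ‖ψ i x‖ ^ 2 = 1) ∧ (∑ x, ‖φ i x‖ ^ 2 = 1))
    (horth : ∀ i j, i ≠ j →
      star (tensorVec (ψ i) (φ i)) ⬝ᵥ tensorVec (ψ j) (φ j) = 0)
    (hspan : ∀ S : Finset (Fin (2 * d - 1)), d ≤ S.card →
      Submodule.span ℂ (ψ '' (S : Set (Fin (2 * d - 1)))) = ⊤ ∧
      Submodule.span ℂ (φ '' (S : Set (Fin (2 * d - 1)))) = ⊤)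
    (τ : Matrix (Fin d × Fin d) (Fin d × Fin d) ℂ)
    (hτ : τ = (2 * (d : ℂ) - 1)⁻¹ • ∑ i, outer (tensorVec (ψ i) (φ i))) :
    (∀ Φ : Fin d × Fin d → ℂ, (∑ x, ‖Φ x‖ ^ 2 = 1) →
        (choiOutput (regroupMat (τ ⊗ₖ τ)) Φ).rank = d * d) ∧
      sInf {r : ℝ | ∃ Φ : Fin d × Fin d → ℂ, (∑ x, ‖Φ x‖ ^ 2 = 1) ∧
          r = Real.logb 2 ((choiOutput (regroupMat (τ ⊗ₖ τ)) Φ).rank)}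
        = 2 * Real.logb 2 d ∧
      sInf {r : ℝ | ∃ χ : Fin d → ℂ, (∑ x, ‖χ x‖ ^ 2 = 1) ∧
          r = Real.logb 2 ((choiOutput τ χ).rank)}
        = Real.logb 2 d := by
  classical
  have hdR : (2:ℝ) ≤ (d:ℝ) := by exact_mod_cast hd
  have hdpos : (0:ℝ) < 2*(d:ℝ)-1 := by linarith
  have hdne : (d:ℝ) ≠ 0 := by linarith
  have hinv : (0:ℝ) < (2*(d:ℝ)-1)⁻¹ := inv_pos.mpr hdpos
  set c : ℂ := (2 * (d:ℂ) - 1)⁻¹ with hc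
  have hτ' : τ = c • ∑ i, outer (tensorVec (ψ i) (φ i)) := hτ
  have hccast : c = ((((2*(d:ℝ)-1))⁻¹ : ℝ) : ℂ) := by rw [hc]; push_cast; ring
  -- single-copy full rank
  have rank1 : ∀ χ : Fin d → ℂ, (∑ x, ‖χ x‖ ^ 2 = 1) → (choiOutput τ χ).rank = d := by
    intro χ hχ
    rw [hτ', aux_choiOutput_formula c ψ φ χ]
    have hker : ∀ x : Fin d → ℂ,
        (∀ k, (∑ a, χ a * ψ k a) ≠ 0 → star (φ k) ⬝ᵥ x = 0) → x = 0 := by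
      intro x hx
      have hspanS : Submodule.span ℂ (φ '' {i | (∑ a, χ a * ψ i a) ≠ 0}) = ⊤ := by
        refine aux_good_span hd hspan _ ?_
        intro hs
        have hχ0 : χ = 0 := aux_dot_span_zero hs (fun i hi => by
          have h0 : (∑ a, χ a * ψ i a) = 0 := not_not.mp hi
          simpa [dotProduct] using h0)
        exact aux_ne_zero_of_unit hχ hχ0
      exact aux_star_dot_span_zero hspanS (fun i hi => hx i hi)
    have h := aux_rank_full ((Fintype.card (Fin d) : ℂ) * c)
        ((d:ℝ) * (2*(d:ℝ)-1)⁻¹)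
        (by rw [hccast]; push_cast; simp)
        (by have : (0:ℝ) < (d:ℝ) := by linarith
            exact mul_pos this hinv)
        (fun k => (∑ a, χ a * ψ k a)) φ hker
    exact h.trans (by simp)
  -- double-copy full rank
  have rank2 : ∀ Φ : Fin d × Fin d → ℂ, (∑ x, ‖Φ x‖ ^ 2 = 1) →
      (choiOutput (regroupMat (τ ⊗ₖ τ)) Φ).rank = d * d := by
    intro Φ hΦ
    have hΦ0 := aux_ne_zero_of_unit hΦ
    rw [aux_regroup_decomp c ψ φ τ hτ',
      aux_choiOutput_formula (c*c)
        (fun k : Fin (2*d-1) × Fin (2*d-1) => tensorVec (ψ k.1) (ψ k.2))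
        (fun k : Fin (2*d-1) × Fin (2*d-1) => tensorVec (φ k.1) (φ k.2)) Φ]
    have ht : ∀ i j, (∑ a : Fin d × Fin d, Φ a * tensorVec (ψ i) (ψ j) a)
        = (fun b => ∑ a, Φ (a, b) * ψ i a) ⬝ᵥ ψ j := by
      intro i j
      rw [Fintype.sum_prod_type]
      simp only [dotProduct, tensorVec]
      rw [Finset.sum_comm]
      refine Finset.sum_congr rfl fun b _ => ?_
      rw [Finset.sum_mul]
      refine Finset.sum_congr rfl fun a _ => ?_
      ring
    have hker : ∀ x : Fin d × Fin d → ℂ,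
        (∀ k : Fin (2*d-1) × Fin (2*d-1),
          (∑ a : Fin d × Fin d, Φ a * tensorVec (ψ k.1) (ψ k.2) a) ≠ 0 →
          star (tensorVec (φ k.1) (φ k.2)) ⬝ᵥ x = 0) → x = 0 := by
      intro x hx
      have spanI : Submodule.span ℂ
          (φ '' {i | (fun b => ∑ a, Φ (a, b) * ψ i a) ≠ 0}) = ⊤ := by
        refine aux_good_span hd hspan _ ?_
        intro hs
        apply hΦ0
        funext p
        have hw : (fun a => Φ (a, p.2)) = 0 := aux_dot_span_zero hs (fun i hi => by
          have h0 : (fun b => ∑ a, Φ (a, b) * ψ i a) = 0 := not_not.mp hi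
          have := congrFun h0 p.2
          simpa [dotProduct] using this)
        have := congrFun hw p.1
        simpa using this
      have spanR : ∀ i, (fun b => ∑ a, Φ (a, b) * ψ i a) ≠ 0 →
          Submodule.span ℂ
            (φ '' {j | (∑ a : Fin d × Fin d, Φ a * tensorVec (ψ i) (ψ j) a) ≠ 0}) = ⊤ := by
        intro i hyi
        refine aux_good_span hd hspan _ ?_
        intro hs
        refine hyi (aux_dot_span_zero hs (fun j hj => ?_))
        have h0 := not_not.mp hj
        rw [ht i j] at h0
        exact h0
      have hg : ∀ i, (fun b => ∑ a, Φ (a, b) * ψ i a) ≠ 0 →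
          (fun b' => ∑ bb, (starRingEnd ℂ) (φ i bb) * x (bb, b')) = 0 := by
        intro i hyi
        refine aux_star_dot_span_zero (spanR i hyi) (fun j hj => ?_)
        have heq : star (φ j) ⬝ᵥ (fun b' => ∑ bb, (starRingEnd ℂ) (φ i bb) * x (bb, b'))
            = star (tensorVec (φ i) (φ j)) ⬝ᵥ x := by
          simp only [dotProduct, tensorVec, Pi.star_apply, RCLike.star_def]
          rw [Fintype.sum_prod_type]
          rw [Finset.sum_comm]
          simp only [Finset.mul_sum]
          refine Finset.sum_congr rfl fun b' _ => Finset.sum_congr rfl fun bb _ => ?_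
          simp only [_root_.map_mul]
          ring
        rw [heq]
        exact hx (i, j) hj
      funext p
      have hcol : (fun bb => x (bb, p.2)) = 0 :=
        aux_star_dot_span_zero spanI (fun i hi => by
          have := congrFun (hg i hi) p.2
          simpa [dotProduct, RCLike.star_def] using this)
      have := congrFun hcol p.1
      simpa using this
    have hc0 : ((Fintype.card (Fin d × Fin d) : ℂ) * (c*c))
        = ((((d:ℝ)*(d:ℝ)) * ((2*(d:ℝ)-1)⁻¹ * (2*(d:ℝ)-1)⁻¹) : ℝ) : ℂ) := by
      rw [hccast]
      simp only [Fintype.card_prod, Fintype.card_fin]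
      push_cast
      ring
    have hr0 : (0:ℝ) < ((d:ℝ)*(d:ℝ)) * ((2*(d:ℝ)-1)⁻¹ * (2*(d:ℝ)-1)⁻¹) := by
      have hdp : (0:ℝ) < (d:ℝ) := by linarith
      exact mul_pos (mul_pos hdp hdp) (mul_pos hinv hinv)
    have h := aux_rank_full ((Fintype.card (Fin d × Fin d) : ℂ) * (c*c))
        (((d:ℝ)*(d:ℝ)) * ((2*(d:ℝ)-1)⁻¹ * (2*(d:ℝ)-1)⁻¹)) hc0 hr0
        (fun k : Fin (2*d-1) × Fin (2*d-1) =>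
          (∑ a : Fin d × Fin d, Φ a * tensorVec (ψ k.1) (ψ k.2) a))
        (fun k : Fin (2*d-1) × Fin (2*d-1) => tensorVec (φ k.1) (φ k.2)) hker
    exact h.trans (by simp)
  refine ⟨rank2, ?_, ?_⟩
  · -- sInf for two copies
    have hi0 : (0 : ℕ) < d := by omega
    have hsing : {r : ℝ | ∃ Φ : Fin d × Fin d → ℂ, (∑ x, ‖Φ x‖ ^ 2 = 1) ∧
        r = Real.logb 2 ((choiOutput (regroupMat (τ ⊗ₖ τ)) Φ).rank)}
        = {Real.logb 2 ((d:ℝ)*(d:ℝ))} := by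
      ext r
      simp only [Set.mem_setOf_eq, Set.mem_singleton_iff]
      constructor
      · rintro ⟨Φ, hΦ, rfl⟩
        rw [rank2 Φ hΦ]
        congr 1
        push_cast
        ring
      · rintro rfl
        refine ⟨Pi.single (⟨0, hi0⟩, ⟨0, hi0⟩) 1, ?_, ?_⟩
        · simp [Pi.single_apply, apply_ite]
        · rw [rank2 _ (by simp [Pi.single_apply, apply_ite])]
          congr 1
          push_cast
          ring
    rw [hsing, csInf_singleton, Real.logb_mul hdne hdne]
    ring
  · -- sInf for one copy
    have hi0 : (0 : ℕ) < d := by omega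
    have hsing : {r : ℝ | ∃ χ : Fin d → ℂ, (∑ x, ‖χ x‖ ^ 2 = 1) ∧
        r = Real.logb 2 ((choiOutput τ χ).rank)} = {Real.logb 2 (d:ℝ)} := by
      ext r
      simp only [Set.mem_setOf_eq, Set.mem_singleton_iff]
      constructor
      · rintro ⟨χ, hχ, rfl⟩
        rw [rank1 χ hχ]
      · rintro rfl
        refine ⟨Pi.single ⟨0, hi0⟩ 1, ?_, ?_⟩
        · simp [Pi.single_apply, apply_ite]
        · rw [rank1 _ (by simp [Pi.single_apply, apply_ite])]
    rw [hsing, csInf_singleton]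
end
end
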